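/- arXiv:0911.5019 — 4 statements merged into one kernel-verified Lean document; each statement's English description precedes it below -/
import Mathlib

section
/- For a positive integer m and positive integer n, let A_m(n) be the set of partitions of n into distinct nonnegative parts with smallest part even such that every even part is a multiple of 2m, and let B_m(n) be the set of partitions of n into distinct odd parts with consecutive differences at most 2m (including the gap to 0). With weights ω_1(λ) = (-1)^{l-1} a^{ℓ_o(λ)} for λ ∈ A_m(n) with l parts and ℓ_o(λ) odd parts, and ω_2(μ) = (-a)^{ℓ(μ)} for μ ∈ B_m(n), we have ∑_{λ ∈ A_m(n)} ω_1(λ) = ∑_{μ ∈ B_m(n)} ω_2(μ) as polynomials in a. -/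
/-- The list of parts of a finset of naturals in decreasing order. -/
def descList (S : Finset ℕ) : List ℕ := (S.sort (· ≤ ·)).reverse

open scoped Classical in
/-- `Aset m n` : partitions of `n` into distinct nonnegative parts (so `0` may be a part)
with smallest part even, in which every even part is a multiple of `2m`. -/
noncomputable def Aset (m n : ℕ) : Finset (Finset ℕ) :=
  (Finset.range (n + 1)).powerset.filter
    (fun S => S.sum id = n ∧ (∃ a ∈ S, Even a ∧ ∀ x ∈ S, a ≤ x) ∧
      ∀ x ∈ S, Even x → 2 * m ∣ x)

open scoped Classical in
/-- `Bset m n` : partitions of `n` into distinct odd parts with consecutive differences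
at most `2m` (including the gap from the smallest part to `0`). -/
noncomputable def Bset (m n : ℕ) : Finset (Finset ℕ) :=
  (Finset.range (n + 1)).powerset.filter
    (fun S => S.sum id = n ∧ (∀ x ∈ S, Odd x) ∧
      ∀ i < S.card, (descList S).getD i 0 - (descList S).getD (i + 1) 0 ≤ 2 * m)

namespace BU

open Finset

def OddsOf (S : Finset ℕ) : Finset ℕ := S.filter (fun x => Odd x)
def EvensOf (S : Finset ℕ) : Finset ℕ := S.filter (fun x => ¬ Odd x)

/-- largest element of `O` below `x`, or `0` if none -/
def pred0 (O : Finset ℕ) (x : ℕ) : ℕ := WithBot.unbotD 0 ((O.filter (fun t => t < x)).max)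

def violOf (m : ℕ) (S : Finset ℕ) : Finset ℕ :=
  (OddsOf S).filter (fun x => 2*m < x - pred0 (OddsOf S) x)

def eSent (S : Finset ℕ) : ℕ := WithTop.untopD 0 ((EvensOf S).min)
def zSent (m : ℕ) (S : Finset ℕ) : ℕ := WithTop.untopD 0 ((violOf m S).min)
def ySent (m : ℕ) (S : Finset ℕ) : ℕ := pred0 (OddsOf S) (zSent m S)
def sSent (m : ℕ) (S : Finset ℕ) : ℕ := (zSent m S - ySent m S - 1) / (2*m)
def bwdCond (m : ℕ) (S : Finset ℕ) : Prop :=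
  eSent S ≠ 0 ∧ (zSent m S = 0 ∨ (ySent m S ≠ 0 ∧ eSent S ≤ 2*m*sSent m S))

instance (m : ℕ) (S : Finset ℕ) : Decidable (bwdCond m S) := by
  unfold bwdCond; infer_instance

def wSent (m : ℕ) (S : Finset ℕ) : ℕ :=
  if zSent m S = 0 then WithBot.unbotD 0 ((OddsOf S).max) else ySent m S

def psi (m : ℕ) (S : Finset ℕ) : Finset ℕ :=
  if bwdCond m S then
    insert (wSent m S + eSent S) ((S.erase (wSent m S)).erase (eSent S))
  else
    insert (zSent m S - 2*m*sSent m S) (insert (2*m*sSent m S) (S.erase (zSent m S)))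

def GoodMin (S : Finset ℕ) : Prop := ∃ a ∈ S, Odd a ∧ ∀ x ∈ S, a ≤ x

def Good (m : ℕ) (S : Finset ℕ) : Prop :=
  0 ∉ S ∧ GoodMin S ∧ (∀ x ∈ S, ¬ Odd x → 2*m ∣ x) ∧
    (EvensOf S ≠ ∅ ∨ violOf m S ≠ ∅)

/- helper lemmas -/

lemma max_unbot'_eq {O : Finset ℕ} {a : ℕ} (ha : a ∈ O) (h : ∀ x ∈ O, x ≤ a) :
    WithBot.unbotD 0 (O.max) = a := by
  have hne : O.Nonempty := ⟨a, ha⟩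
  have h1 : O.max = (O.max' hne : ℕ) := (Finset.coe_max' hne).symm
  have h2 : O.max' hne = a :=
    le_antisymm (Finset.max'_le _ _ _ h) (Finset.le_max' _ _ ha)
  rw [h1, h2]; rfl

lemma min_untop'_eq {O : Finset ℕ} {a : ℕ} (ha : a ∈ O) (h : ∀ x ∈ O, a ≤ x) :
    WithTop.untopD 0 (O.min) = a := by
  have hne : O.Nonempty := ⟨a, ha⟩
  have h1 : O.min = (O.min' hne : ℕ) := (Finset.coe_min' hne).symm
  have h2 : O.min' hne = a :=
    le_antisymm (Finset.min'_le _ _ ha) (Finset.le_min' _ _ _ h)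
  rw [h1, h2]; rfl

lemma min_untop'_empty : WithTop.untopD 0 ((∅ : Finset ℕ).min) = 0 := rfl

lemma max_unbot'_empty : WithBot.unbotD 0 ((∅ : Finset ℕ).max) = 0 := rfl

lemma min_untop'_mem {O : Finset ℕ} (h : O.Nonempty) : WithTop.untopD 0 (O.min) ∈ O := by
  have h1 : O.min = (O.min' h : ℕ) := (Finset.coe_min' h).symm
  rw [h1]; exact Finset.min'_mem _ h

lemma min_untop'_le {O : Finset ℕ} {a : ℕ} (ha : a ∈ O) : WithTop.untopD 0 (O.min) ≤ a := by
  have h1 : O.min = (O.min' ⟨a, ha⟩ : ℕ) := (Finset.coe_min' _).symm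
  rw [h1]; exact Finset.min'_le _ _ ha

lemma pred0_eq {O : Finset ℕ} {x y : ℕ} (hy : y ∈ O) (hyx : y < x)
    (h : ∀ t ∈ O, t < x → t ≤ y) : pred0 O x = y := by
  unfold pred0
  exact max_unbot'_eq (Finset.mem_filter.2 ⟨hy, hyx⟩)
    (fun t ht => h t (Finset.mem_filter.1 ht).1 (Finset.mem_filter.1 ht).2)

lemma pred0_eq_zero {O : Finset ℕ} {x : ℕ} (h : ∀ t ∈ O, ¬ t < x) : pred0 O x = 0 := by
  unfold pred0
  have : O.filter (fun t => t < x) = ∅ := Finset.filter_eq_empty_iff.2 h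
  rw [this]; rfl

lemma pred0_mem_of_ne {O : Finset ℕ} {x : ℕ} (h : pred0 O x ≠ 0) :
    pred0 O x ∈ O ∧ pred0 O x < x := by
  by_cases hne : (O.filter (fun t => t < x)).Nonempty
  · have h1 : (O.filter (fun t => t < x)).max = ((O.filter (fun t => t < x)).max' hne : ℕ) :=
      (Finset.coe_max' hne).symm
    have h2 : pred0 O x = (O.filter (fun t => t < x)).max' hne := by
      unfold pred0; rw [h1]; rfl
    have := Finset.max'_mem (O.filter (fun t => t < x)) hne
    rw [← h2] at this
    exact ⟨(Finset.mem_filter.1 this).1, (Finset.mem_filter.1 this).2⟩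
  · exfalso; apply h
    rw [Finset.not_nonempty_iff_eq_empty] at hne
    unfold pred0; rw [hne]; rfl

lemma le_pred0 {O : Finset ℕ} {x t : ℕ} (ht : t ∈ O) (htx : t < x) : t ≤ pred0 O x := by
  have hmem : t ∈ O.filter (fun t => t < x) := Finset.mem_filter.2 ⟨ht, htx⟩
  have hne : (O.filter (fun t => t < x)).Nonempty := ⟨t, hmem⟩
  have h1 : (O.filter (fun t => t < x)).max = ((O.filter (fun t => t < x)).max' hne : ℕ) :=
    (Finset.coe_max' hne).symm
  have h2 : pred0 O x = (O.filter (fun t => t < x)).max' hne := by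
    unfold pred0; rw [h1]; rfl
  rw [h2]; exact Finset.le_max' _ _ hmem

lemma pred0_lt_of_pos {O : Finset ℕ} {x : ℕ} (hx : 0 < x) : pred0 O x < x := by
  by_cases h : pred0 O x = 0
  · omega
  · exact (pred0_mem_of_ne h).2

lemma pred0_congr {O₁ O₂ : Finset ℕ} {x : ℕ}
    (h : O₁.filter (fun t => t < x) = O₂.filter (fun t => t < x)) :
    pred0 O₁ x = pred0 O₂ x := by unfold pred0; rw [h]

lemma filter_lt_insert_of_le {O : Finset ℕ} {a x : ℕ} (h : x ≤ a) :
    (insert a O).filter (fun t => t < x) = O.filter (fun t => t < x) := by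
  rw [Finset.filter_insert, if_neg (by omega)]

lemma OddsOf_insert_odd {S : Finset ℕ} {a : ℕ} (ha : Odd a) :
    OddsOf (insert a S) = insert a (OddsOf S) := by
  unfold OddsOf; rw [Finset.filter_insert, if_pos ha]

lemma OddsOf_insert_even {S : Finset ℕ} {a : ℕ} (ha : ¬ Odd a) :
    OddsOf (insert a S) = OddsOf S := by
  unfold OddsOf; rw [Finset.filter_insert, if_neg ha]

lemma EvensOf_insert_odd {S : Finset ℕ} {a : ℕ} (ha : Odd a) :
    EvensOf (insert a S) = EvensOf S := by
  unfold EvensOf; rw [Finset.filter_insert, if_neg (by simpa using ha)]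

lemma EvensOf_insert_even {S : Finset ℕ} {a : ℕ} (ha : ¬ Odd a) :
    EvensOf (insert a S) = insert a (EvensOf S) := by
  unfold EvensOf; rw [Finset.filter_insert, if_pos ha]

lemma mem_OddsOf {S : Finset ℕ} {x : ℕ} : x ∈ OddsOf S ↔ x ∈ S ∧ Odd x := Finset.mem_filter

lemma mem_EvensOf {S : Finset ℕ} {x : ℕ} : x ∈ EvensOf S ↔ x ∈ S ∧ ¬ Odd x := Finset.mem_filter

lemma mem_violOf {m : ℕ} {S : Finset ℕ} {x : ℕ} :
    x ∈ violOf m S ↔ x ∈ OddsOf S ∧ 2*m < x - pred0 (OddsOf S) x := Finset.mem_filter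


/-! ## The pairing context -/

structure Ctx (m : ℕ) : Type where
  R : Finset ℕ
  b : ℕ
  y : ℕ
  d : ℕ
  hm : 0 < m
  hd : 1 ≤ d
  hb : Odd b
  hy : y < b
  hb2m : b ≤ y + 2*m
  hyR : y = 0 ∨ (y ∈ R ∧ Odd y)
  h0R : 0 ∉ R
  hzR : b + 2*m*d ∉ R
  hbR : b ∉ R
  hgR : 2*m*d ∉ R
  hpred : ∀ x ∈ R, Odd x → x < b + 2*m*d → x ≤ y
  hviol : ∀ x ∈ R, Odd x → x < b + 2*m*d → x - pred0 (OddsOf R) x ≤ 2*m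
  hEdvd : ∀ x ∈ R, ¬ Odd x → 2*m ∣ x
  hEg : ∀ x ∈ R, ¬ Odd x → 2*m*d < x

namespace Ctx

variable {m : ℕ} (c : Ctx m)

def z : ℕ := c.b + 2*m*c.d
def g : ℕ := 2*m*c.d
def Sf : Finset ℕ := insert c.z c.R
def Sb : Finset ℕ := insert c.b (insert c.g c.R)

lemma hzR' : c.z ∉ c.R := c.hzR
lemma hgR' : c.g ∉ c.R := c.hgR

lemma hg2m : 2*m ≤ c.g := Nat.le_mul_of_pos_right _ c.hd
lemma hbpos : 0 < c.b := c.hb.pos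
lemma hevg : ¬ Odd c.g := by
  rw [Nat.not_odd_iff_even]; exact ⟨m*c.d, by unfold g; ring⟩
lemma hoddz : Odd c.z := by
  unfold z; exact c.hb.add_even ⟨m*c.d, by ring⟩
lemma hbltz : c.b < c.z := by
  have := c.hg2m; have := c.hm; unfold z; unfold g at *; omega
lemma hyltz : c.y < c.z := lt_trans c.hy c.hbltz
lemma hzpos : 0 < c.z := lt_of_le_of_lt (Nat.zero_le _) c.hyltz
lemma hgltz : c.g < c.z := by
  have := c.hbpos; unfold z; unfold g; omega
lemma hbne_g : c.b ≠ c.g := fun h => c.hevg (h ▸ c.hb)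
lemma hzne_g : c.z ≠ c.g := fun h => c.hevg (h ▸ c.hoddz)
lemma hzne_b : c.z ≠ c.b := ne_of_gt c.hbltz

lemma odds_Sf : OddsOf c.Sf = insert c.z (OddsOf c.R) := OddsOf_insert_odd c.hoddz
lemma evens_Sf : EvensOf c.Sf = EvensOf c.R := EvensOf_insert_odd c.hoddz
lemma odds_Sb : OddsOf c.Sb = insert c.b (OddsOf c.R) := by
  unfold Sb; rw [OddsOf_insert_odd c.hb, OddsOf_insert_even c.hevg]
lemma evens_Sb : EvensOf c.Sb = insert c.g (EvensOf c.R) := by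
  unfold Sb; rw [EvensOf_insert_odd c.hb, EvensOf_insert_even c.hevg]

lemma erase_Sf : c.Sf.erase c.z = c.R := Finset.erase_insert c.hzR
lemma erase_Sb : (c.Sb.erase c.b).erase c.g = c.R := by
  unfold Sb
  have hgR' : c.g ∉ c.R := c.hgR
  rw [Finset.erase_insert (by simp [c.hbne_g, c.hbR]), Finset.erase_insert hgR']

lemma hOy : ∀ x ∈ OddsOf c.R, x < c.z → x ≤ c.y := by
  intro x hx hxz
  exact c.hpred x (mem_OddsOf.1 hx).1 (mem_OddsOf.1 hx).2 hxz

lemma pred0_z_Sf : pred0 (OddsOf c.Sf) c.z = c.y := by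
  rw [odds_Sf, pred0_congr (filter_lt_insert_of_le (le_refl c.z))]
  rcases c.hyR with h0 | ⟨hyR, hyodd⟩
  · rw [h0]
    apply pred0_eq_zero
    intro t ht htz
    have h1 := c.hOy t ht htz
    have h2 := (mem_OddsOf.1 ht).2.pos
    omega
  · exact pred0_eq (mem_OddsOf.2 ⟨hyR, hyodd⟩) c.hyltz c.hOy

lemma pred0_b_Sb : pred0 (OddsOf c.Sb) c.b = c.y := by
  rw [odds_Sb, pred0_congr (filter_lt_insert_of_le (le_refl c.b))]
  rcases c.hyR with h0 | ⟨hyR, hyodd⟩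
  · rw [h0]
    apply pred0_eq_zero
    intro t ht htb
    have h1 := c.hOy t ht (lt_trans htb c.hbltz)
    have h2 := (mem_OddsOf.1 ht).2.pos
    omega
  · exact pred0_eq (mem_OddsOf.2 ⟨hyR, hyodd⟩) c.hy
      (fun t ht htb => c.hOy t ht (lt_trans htb c.hbltz))

/-- low odd elements have the same pred0 in Sf as in R -/
lemma pred0_low_Sf {x : ℕ} (hx : x ≤ c.y) :
    pred0 (OddsOf c.Sf) x = pred0 (OddsOf c.R) x := by
  rw [odds_Sf]
  exact pred0_congr (filter_lt_insert_of_le (le_trans hx (le_of_lt c.hyltz)))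

lemma pred0_low_Sb {x : ℕ} (hx : x ≤ c.y) :
    pred0 (OddsOf c.Sb) x = pred0 (OddsOf c.R) x := by
  rw [odds_Sb]
  exact pred0_congr (filter_lt_insert_of_le (le_trans hx (le_of_lt c.hy)))

lemma noviol_low_Sf : ∀ x ∈ OddsOf c.R, x < c.z → ¬(2*m < x - pred0 (OddsOf c.Sf) x) := by
  intro x hx hxz
  rw [pred0_low_Sf c (c.hOy x hx hxz)]
  have := c.hviol x (mem_OddsOf.1 hx).1 (mem_OddsOf.1 hx).2 hxz
  omega

lemma noviol_low_Sb : ∀ x ∈ OddsOf c.R, x < c.z → ¬(2*m < x - pred0 (OddsOf c.Sb) x) := by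
  intro x hx hxz
  rw [pred0_low_Sb c (c.hOy x hx hxz)]
  have := c.hviol x (mem_OddsOf.1 hx).1 (mem_OddsOf.1 hx).2 hxz
  omega

lemma zSent_Sf : zSent m c.Sf = c.z := by
  unfold zSent
  apply min_untop'_eq
  · rw [mem_violOf, pred0_z_Sf]
    constructor
    · rw [odds_Sf]; exact Finset.mem_insert_self _ _
    · have h1 := c.hg2m; have h2 := c.hy
      have : c.z = c.b + c.g := rfl
      omega
  · intro v hv
    rw [mem_violOf] at hv
    by_contra hlt
    push_neg at hlt
    have hvR : v ∈ OddsOf c.R := by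
      have := hv.1
      rw [odds_Sf, Finset.mem_insert] at this
      rcases this with h | h
      · omega
      · exact h
    exact c.noviol_low_Sf v hvR hlt hv.2

lemma ySent_Sf : ySent m c.Sf = c.y := by
  unfold ySent; rw [zSent_Sf, pred0_z_Sf]

lemma slack_arith {r t M : ℕ} (hM : 0 < M) (hr : r < M) : (r + t*M) / M = t := by
  rw [Nat.add_mul_div_right _ _ hM, Nat.div_eq_of_lt hr, zero_add]

lemma sSent_Sf : sSent m c.Sf = c.d := by
  unfold sSent
  rw [zSent_Sf, ySent_Sf]
  have h1 : c.z - c.y - 1 = (c.b - c.y - 1) + c.d * (2*m) := by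
    have hy' := c.hy
    have hz' : c.z = c.b + 2*m*c.d := rfl
    have hcomm : 2*m*c.d = c.d * (2*m) := by ring
    omega
  rw [h1, slack_arith (by have := c.hm; omega : 0 < 2*m)]
  have h2 := c.hb2m; have h3 := c.hy; omega


lemma hz_viol : c.z ∈ violOf m c.Sf := by
  rw [mem_violOf, pred0_z_Sf]
  refine ⟨by rw [odds_Sf]; exact Finset.mem_insert_self _ _, ?_⟩
  have h1 := c.hg2m; have h2 := c.hy
  have h3 : c.z = c.b + c.g := rfl
  omega

lemma eSent_Sf_cases : EvensOf c.R = ∅ ∨ (eSent c.Sf ∈ EvensOf c.R ∧ c.g < eSent c.Sf) := by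
  rcases (EvensOf c.R).eq_empty_or_nonempty with h | h
  · exact Or.inl h
  · right
    have hmem : eSent c.Sf ∈ EvensOf c.R := by
      unfold eSent; rw [evens_Sf]; exact min_untop'_mem h
    exact ⟨hmem, c.hEg _ (mem_EvensOf.1 hmem).1 (mem_EvensOf.1 hmem).2⟩

lemma bwdCond_Sf : ¬ bwdCond m c.Sf := by
  unfold bwdCond
  rintro ⟨he, hcase⟩
  rcases c.eSent_Sf_cases with h | ⟨hmem, hgt⟩
  · apply he; unfold eSent; rw [evens_Sf, h]; rfl
  · rw [zSent_Sf, sSent_Sf] at hcase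
    rcases hcase with hz0 | ⟨_, hle⟩
    · have := c.hzpos; omega
    · have : c.g = 2*m*c.d := rfl
      omega

lemma psi_Sf : psi m c.Sf = c.Sb := by
  rw [psi, if_neg c.bwdCond_Sf, zSent_Sf, sSent_Sf, erase_Sf]
  have h1 : c.z - 2*m*c.d = c.b := by
    have : c.z = c.b + 2*m*c.d := rfl
    omega
  rw [h1]
  rfl

lemma eSent_Sb : eSent c.Sb = c.g := by
  unfold eSent; rw [evens_Sb]
  refine min_untop'_eq (Finset.mem_insert_self _ _) (fun x hx => ?_)
  rcases Finset.mem_insert.1 hx with rfl | hx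
  · exact le_refl _
  · exact le_of_lt (c.hEg x (mem_EvensOf.1 hx).1 (mem_EvensOf.1 hx).2)

lemma odds_R_split : ∀ x ∈ OddsOf c.R, x ≤ c.y ∨ c.z < x := by
  intro x hx
  by_cases h : x < c.z
  · exact Or.inl (c.hOy x hx h)
  · right
    have hne : x ≠ c.z := by
      intro heq
      exact c.hzR' (heq ▸ (mem_OddsOf.1 hx).1)
    omega

lemma pred0_b_viol_free : c.b ∉ violOf m c.Sb := by
  rw [mem_violOf, pred0_b_Sb]
  rintro ⟨-, hv⟩
  have := c.hb2m; omega

lemma bwd_facts_Sb : bwdCond m c.Sb ∧ wSent m c.Sb = c.b := by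
  have hgne : c.g ≠ 0 := by have := c.hg2m; have := c.hm; omega
  have hbmem : c.b ∈ OddsOf c.Sb := by rw [odds_Sb]; exact Finset.mem_insert_self _ _
  by_cases hhi : ((OddsOf c.R).filter (fun x => c.z < x)).Nonempty
  · -- there is an odd part of R above z
    set x₀ := ((OddsOf c.R).filter (fun x => c.z < x)).min' hhi with hx₀def
    have hx₀mem := Finset.min'_mem _ hhi
    rw [Finset.mem_filter] at hx₀mem
    obtain ⟨hx₀R, hx₀z⟩ := hx₀mem
    have hx₀min : ∀ t ∈ OddsOf c.R, c.z < t → x₀ ≤ t := fun t ht htz =>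
      Finset.min'_le _ _ (Finset.mem_filter.2 ⟨ht, htz⟩)
    have hbx₀ : c.b < x₀ := lt_trans c.hbltz hx₀z
    have hpred0x₀ : pred0 (OddsOf c.Sb) x₀ = c.b := by
      apply pred0_eq hbmem hbx₀
      intro t ht htx
      rw [odds_Sb, Finset.mem_insert] at ht
      rcases ht with rfl | ht
      · exact le_refl _
      · rcases c.odds_R_split t ht with h | h
        · have := c.hy; omega
        · have := hx₀min t ht h; omega
    have hx₀viol : x₀ ∈ violOf m c.Sb := by
      rw [mem_violOf, hpred0x₀]
      refine ⟨by rw [odds_Sb]; exact Finset.mem_insert_of_mem hx₀R, ?_⟩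
      have h1 := c.hg2m
      have h3 : c.z = c.b + c.g := rfl
      omega
    have hzSb : zSent m c.Sb = x₀ := by
      unfold zSent
      apply min_untop'_eq hx₀viol
      intro v hv
      have hv' := hv
      rw [mem_violOf] at hv'
      have hv1 := hv'.1
      rw [odds_Sb, Finset.mem_insert] at hv1
      rcases hv1 with rfl | hvR
      · exact absurd hv c.pred0_b_viol_free
      · rcases c.odds_R_split v hvR with h | h
        · exact absurd hv'.2 (c.noviol_low_Sb v hvR (by have := c.hyltz; omega))
        · exact hx₀min v hvR h
    have hx₀ne : x₀ ≠ 0 := by have := c.hzpos; omega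
    have hySb : ySent m c.Sb = c.b := by
      unfold ySent; rw [hzSb, hpred0x₀]
    have hsSb : c.g ≤ 2*m*(sSent m c.Sb) := by
      unfold sSent
      rw [hzSb, hySb]
      have hd : c.d ≤ (x₀ - c.b - 1)/(2*m) := by
        rw [Nat.le_div_iff_mul_le (by have := c.hm; omega : 0 < 2*m)]
        have h3 : c.z = c.b + 2*m*c.d := rfl
        have h4 : c.d * (2*m) = 2*m*c.d := by ring
        omega
      have : c.g = 2*m*c.d := rfl
      calc c.g = 2*m*c.d := rfl
        _ ≤ 2*m*((x₀ - c.b - 1)/(2*m)) := Nat.mul_le_mul_left _ hd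
    refine ⟨⟨by rw [eSent_Sb]; exact hgne, Or.inr ⟨by rw [hySb]; exact (by have := c.hbpos; omega), by rw [eSent_Sb]; exact hsSb⟩⟩, ?_⟩
    unfold wSent
    rw [hzSb, if_neg hx₀ne, hySb]
  · -- no odd part of R above z
    have hall : ∀ x ∈ OddsOf c.R, x ≤ c.y := by
      intro x hx
      rcases c.odds_R_split x hx with h | h
      · exact h
      · exact absurd ⟨x, Finset.mem_filter.2 ⟨hx, h⟩⟩ hhi
    have hviolemp : violOf m c.Sb = ∅ := by
      rw [Finset.eq_empty_iff_forall_notMem]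
      intro v hv
      have hv' := hv
      rw [mem_violOf] at hv'
      have hv1 := hv'.1
      rw [odds_Sb, Finset.mem_insert] at hv1
      rcases hv1 with rfl | hvR
      · exact c.pred0_b_viol_free hv
      · exact c.noviol_low_Sb v hvR (by have := hall v hvR; have := c.hyltz; omega) hv'.2
    have hzSb : zSent m c.Sb = 0 := by
      unfold zSent; rw [hviolemp]; rfl
    refine ⟨⟨by rw [eSent_Sb]; exact hgne, Or.inl hzSb⟩, ?_⟩
    unfold wSent
    rw [hzSb, if_pos rfl]
    apply max_unbot'_eq hbmem
    intro x hx
    rw [odds_Sb, Finset.mem_insert] at hx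
    rcases hx with rfl | hx
    · exact le_refl _
    · have := hall x hx; have := c.hy; omega

lemma psi_Sb : psi m c.Sb = c.Sf := by
  obtain ⟨hb, hw⟩ := c.bwd_facts_Sb
  rw [psi, if_pos hb, hw, eSent_Sb, erase_Sb]
  rfl

lemma card_Sf : c.Sf.card = c.R.card + 1 := Finset.card_insert_of_notMem c.hzR'

lemma card_Sb : c.Sb.card = c.R.card + 2 := by
  unfold Sb
  rw [Finset.card_insert_of_notMem (by simp [c.hbne_g, c.hbR]),
    Finset.card_insert_of_notMem c.hgR']

lemma sum_Sf : c.Sf.sum id = c.R.sum id + c.z := by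
  unfold Sf
  rw [Finset.sum_insert c.hzR']
  simp [add_comm]

lemma sum_Sb : c.Sb.sum id = c.R.sum id + c.z := by
  unfold Sb
  rw [Finset.sum_insert (by simp [c.hbne_g, c.hbR]), Finset.sum_insert c.hgR']
  have : c.z = c.b + c.g := rfl
  simp [this]
  ring

lemma oddcard_Sf : (OddsOf c.Sf).card = (OddsOf c.R).card + 1 := by
  rw [odds_Sf, Finset.card_insert_of_notMem (fun h => c.hzR' (mem_OddsOf.1 h).1)]

lemma oddcard_Sb : (OddsOf c.Sb).card = (OddsOf c.R).card + 1 := by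
  rw [odds_Sb, Finset.card_insert_of_notMem (fun h => c.hbR (mem_OddsOf.1 h).1)]

lemma hblt2m (h0 : c.y = 0) : c.b < 2*m := by
  have h1 := c.hb2m
  have h2 : c.b ≠ 2*m := by
    intro heq
    have hb := c.hb
    rw [heq] at hb
    exact (Nat.not_odd_iff_even.2 ⟨m, by ring⟩) hb
  omega

lemma even_big : ∀ x ∈ c.R, ¬ Odd x → c.g + 2*m ≤ x := by
  intro x hx hodd
  obtain ⟨k, hk⟩ := c.hEdvd x hx hodd
  have hgt := c.hEg x hx hodd
  have hg : c.g = 2*m*c.d := rfl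
  have hm := c.hm
  have hdk : c.d < k := by
    apply Nat.lt_of_mul_lt_mul_left (a := 2*m)
    rw [← hk]
    exact hgt
  calc c.g + 2*m = 2*m*(c.d+1) := by rw [hg]; ring
    _ ≤ 2*m*k := Nat.mul_le_mul_left _ (by omega)
    _ = x := hk.symm

lemma odds_high_of_y0 (h0 : c.y = 0) : ∀ x ∈ c.R, Odd x → c.z < x := by
  intro x hx hodd
  rcases c.odds_R_split x (mem_OddsOf.2 ⟨hx, hodd⟩) with h | h
  · have := hodd.pos; omega
  · exact h

/-- the minimum odd element of R, in the case `y ≠ 0`, is at most `2*m` -/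
lemma m0_spec (hyR : c.y ∈ c.R) (hyodd : Odd c.y) :
    ∃ a ∈ c.R, Odd a ∧ a ≤ 2*m ∧ a ≤ c.y ∧ ∀ x ∈ c.R, Odd x → a ≤ x := by
  have hne : (OddsOf c.R).Nonempty := ⟨c.y, mem_OddsOf.2 ⟨hyR, hyodd⟩⟩
  set a := (OddsOf c.R).min' hne with ha
  have hamem := Finset.min'_mem _ hne
  have haley : a ≤ c.y := Finset.min'_le _ _ (mem_OddsOf.2 ⟨hyR, hyodd⟩)
  have hpz : pred0 (OddsOf c.R) a = 0 := by
    apply pred0_eq_zero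
    intro t ht htl
    exact absurd (Finset.min'_le _ _ ht) (by omega)
  have haviol := c.hviol a (mem_OddsOf.1 hamem).1 (mem_OddsOf.1 hamem).2
    (by have := c.hyltz; have : c.z = c.b + 2*m*c.d := rfl; omega)
  rw [hpz] at haviol
  exact ⟨a, (mem_OddsOf.1 hamem).1, (mem_OddsOf.1 hamem).2, by omega, haley,
    fun x hx hodd => Finset.min'_le _ _ (mem_OddsOf.2 ⟨hx, hodd⟩)⟩

lemma goodmin_Sf : GoodMin c.Sf := by
  rcases c.hyR with h0 | ⟨hyR, hyodd⟩
  · refine ⟨c.z, Finset.mem_insert_self _ _, c.hoddz, ?_⟩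
    intro x hx
    rcases Finset.mem_insert.1 hx with rfl | hxR
    · exact le_refl _
    · by_cases hodd : Odd x
      · exact le_of_lt (c.odds_high_of_y0 h0 x hxR hodd)
      · have h1 := c.even_big x hxR hodd
        have h2 := c.hblt2m h0
        have h3 : c.z = c.b + c.g := rfl
        omega
  · obtain ⟨a, haR, haodd, ha2m, haley, hamin⟩ := c.m0_spec hyR hyodd
    refine ⟨a, Finset.mem_insert_of_mem haR, haodd, ?_⟩
    intro x hx
    rcases Finset.mem_insert.1 hx with rfl | hxR
    · have := c.hyltz; omega
    · by_cases hodd : Odd x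
      · exact hamin x hxR hodd
      · have h1 := c.hEg x hxR hodd
        have h2 := c.hg2m
        have hgg : c.g = 2*m*c.d := rfl
        omega

lemma goodmin_Sb : GoodMin c.Sb := by
  rcases c.hyR with h0 | ⟨hyR, hyodd⟩
  · refine ⟨c.b, Finset.mem_insert_self _ _, c.hb, ?_⟩
    intro x hx
    rcases Finset.mem_insert.1 hx with rfl | hx
    · exact le_refl _
    · rcases Finset.mem_insert.1 hx with rfl | hxR
      · have := c.hblt2m h0; have := c.hg2m; omega
      · by_cases hodd : Odd x
        · have := c.odds_high_of_y0 h0 x hxR hodd; have := c.hbltz; omega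
        · have h1 := c.hEg x hxR hodd
          have h2 := c.hg2m
          have h3 := c.hblt2m h0
          have hgg : c.g = 2*m*c.d := rfl
          omega
  · obtain ⟨a, haR, haodd, ha2m, haley, hamin⟩ := c.m0_spec hyR hyodd
    refine ⟨a, Finset.mem_insert_of_mem (Finset.mem_insert_of_mem haR), haodd, ?_⟩
    intro x hx
    rcases Finset.mem_insert.1 hx with rfl | hx
    · have := c.hy; omega
    · rcases Finset.mem_insert.1 hx with rfl | hxR
      · have := c.hg2m; omega
      · by_cases hodd : Odd x
        · exact hamin x hxR hodd
        · have h1 := c.hEg x hxR hodd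
          have h2 := c.hg2m
          have hgg : c.g = 2*m*c.d := rfl
          omega

lemma good_Sf : Good m c.Sf := by
  refine ⟨?_, c.goodmin_Sf, ?_, Or.inr ?_⟩
  · intro h
    rcases Finset.mem_insert.1 h with h | h
    · have := c.hzpos; omega
    · exact c.h0R h
  · intro x hx hodd
    rcases Finset.mem_insert.1 hx with rfl | hxR
    · exact absurd c.hoddz hodd
    · exact c.hEdvd x hxR hodd
  · intro h
    have := c.hz_viol
    rw [h] at this
    exact absurd this (Finset.notMem_empty _)

lemma good_Sb : Good m c.Sb := by
  refine ⟨?_, c.goodmin_Sb, ?_, Or.inl ?_⟩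
  · intro h
    rcases Finset.mem_insert.1 h with h | h
    · have := c.hbpos; omega
    · rcases Finset.mem_insert.1 h with h | h
      · have := c.hg2m; have := c.hm; omega
      · exact c.h0R h
  · intro x hx hodd
    rcases Finset.mem_insert.1 hx with rfl | hx
    · exact absurd c.hb hodd
    · rcases Finset.mem_insert.1 hx with rfl | hxR
      · exact ⟨c.d, rfl⟩
      · exact c.hEdvd x hxR hodd
  · intro h
    have hg : c.g ∈ EvensOf c.Sb := by
      rw [evens_Sb]; exact Finset.mem_insert_self _ _
    rw [h] at hg
    exact absurd hg (Finset.notMem_empty _)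

end Ctx

lemma OddsOf_erase {S : Finset ℕ} {a : ℕ} : OddsOf (S.erase a) = (OddsOf S).erase a := by
  unfold OddsOf; exact Finset.filter_erase _ _ _

lemma filter_lt_erase_of_le {O : Finset ℕ} {z x : ℕ} (h : x ≤ z) :
    (O.erase z).filter (fun t => t < x) = O.filter (fun t => t < x) := by
  rw [Finset.filter_erase, Finset.erase_eq_of_notMem]
  intro hz
  have := (Finset.mem_filter.1 hz).2
  omega

lemma viol_gt {m : ℕ} {S : Finset ℕ} {v : ℕ} (hv : v ∈ violOf m S) : 2*m < v := by
  have := (mem_violOf.1 hv).2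
  omega

lemma build_fwd {m : ℕ} (hm : 0 < m) {S : Finset ℕ} (h0 : 0 ∉ S)
    (hdvd : ∀ x ∈ S, ¬ Odd x → 2*m ∣ x) (hV : (violOf m S).Nonempty)
    (hEbig : ∀ x ∈ EvensOf S,
      2*m*(((violOf m S).min' hV - pred0 (OddsOf S) ((violOf m S).min' hV) - 1)/(2*m)) < x) :
    ∃ c : Ctx m, S = c.Sf := by
  set O := OddsOf S with hO
  set z := (violOf m S).min' hV with hz
  set y := pred0 O z with hy
  set s := (z - y - 1)/(2*m) with hs
  have hzV : z ∈ violOf m S := Finset.min'_mem _ hV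
  have hzO : z ∈ O := (mem_violOf.1 hzV).1
  have hzS : z ∈ S := (mem_OddsOf.1 hzO).1
  have hzodd : Odd z := (mem_OddsOf.1 hzO).2
  have hzviol : 2*m < z - y := (mem_violOf.1 hzV).2
  have hzmin : ∀ v ∈ violOf m S, z ≤ v := fun v hv => Finset.min'_le _ _ hv
  have h2m : 0 < 2*m := by omega
  have hdm := Nat.div_add_mod (z - y - 1) (2*m)
  have hmod := Nat.mod_lt (z - y - 1) h2m
  have hs1 : 1 ≤ s := by
    rw [hs, Nat.le_div_iff_mul_le h2m]
    omega
  have hsle : 2*m*s ≤ z - y - 1 := by rw [hs]; omega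
  have hslt : z - y - 1 < 2*m*s + 2*m := by rw [hs]; omega
  set b := z - 2*m*s with hb
  have hyb : y < b := by omega
  have hb2m : b ≤ y + 2*m := by omega
  have hbz : b + 2*m*s = z := by omega
  have hoddb : Odd b := by
    have hev : Even (2*m*s) := ⟨m*s, by ring⟩
    exact Nat.Odd.sub_even (by omega) hzodd hev
  have hbnotS : b ∉ S := by
    intro hbS
    have hbO : b ∈ O := mem_OddsOf.2 ⟨hbS, hoddb⟩
    have := le_pred0 hbO (by omega : b < z)
    rw [← hy] at this
    omega
  refine ⟨⟨S.erase z, b, y, s, hm, hs1, hoddb, hyb, hb2m, ?_, ?_, ?_, ?_, ?_, ?_, ?_, ?_, ?_⟩, ?_⟩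
  · -- hyR
    by_cases hy0 : y = 0
    · exact Or.inl hy0
    · right
      obtain ⟨hyO, hyz⟩ := pred0_mem_of_ne (hy ▸ hy0)
      rw [← hy] at hyz
      exact ⟨Finset.mem_erase.2 ⟨by omega, (mem_OddsOf.1 hyO).1⟩, (mem_OddsOf.1 hyO).2⟩
  · -- h0R
    intro h
    exact h0 (Finset.mem_of_mem_erase h)
  · -- hzR : b + 2*m*s ∉ erase
    rw [hbz]
    exact Finset.notMem_erase _ _
  · -- hbR
    intro h
    exact hbnotS (Finset.mem_of_mem_erase h)
  · -- hgR
    intro h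
    have hgS : 2*m*s ∈ S := Finset.mem_of_mem_erase h
    have hgE : 2*m*s ∈ EvensOf S := mem_EvensOf.2 ⟨hgS, by
      rw [Nat.not_odd_iff_even]; exact ⟨m*s, by ring⟩⟩
    have := hEbig _ hgE
    omega
  · -- hpred
    intro x hx hxodd hxz
    rw [hbz] at hxz
    have hxO : x ∈ O := mem_OddsOf.2 ⟨Finset.mem_of_mem_erase hx, hxodd⟩
    have := le_pred0 hxO hxz
    rw [← hy] at this
    exact this
  · -- hviol
    intro x hx hxodd hxz
    rw [hbz] at hxz
    have hxO : x ∈ O := mem_OddsOf.2 ⟨Finset.mem_of_mem_erase hx, hxodd⟩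
    have hxy : x ≤ y := by
      have := le_pred0 hxO hxz
      rw [← hy] at this
      exact this
    have hpeq : pred0 (OddsOf (S.erase z)) x = pred0 O x := by
      rw [OddsOf_erase]
      exact pred0_congr (filter_lt_erase_of_le (by omega))
    rw [hpeq]
    by_contra hcon
    push_neg at hcon
    have : x ∈ violOf m S := mem_violOf.2 ⟨hxO, hcon⟩
    have := hzmin x this
    omega
  · -- hEdvd
    intro x hx hxodd
    exact hdvd x (Finset.mem_of_mem_erase hx) hxodd
  · -- hEg
    intro x hx hxodd
    have hxE : x ∈ EvensOf S := mem_EvensOf.2 ⟨Finset.mem_of_mem_erase hx, hxodd⟩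
    have := hEbig _ hxE
    exact this
  · -- S = Sf
    show S = insert (b + 2*m*s) (S.erase z)
    rw [hbz, Finset.insert_erase hzS]

lemma build_bwd {m : ℕ} (hm : 0 < m) {S : Finset ℕ} (h0 : 0 ∉ S)
    (hdvd : ∀ x ∈ S, ¬ Odd x → 2*m ∣ x) {e bc : ℕ}
    (he : e ∈ EvensOf S) (hemin : ∀ x ∈ EvensOf S, e ≤ x)
    (hbcO : bc ∈ OddsOf S)
    (hbcnv : bc ∉ violOf m S)
    (hnoodd : ∀ x ∈ OddsOf S, bc < x → bc + e < x)
    (hnvlow : ∀ x ∈ OddsOf S, x < bc → x ∉ violOf m S) :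
    ∃ c : Ctx m, S = c.Sb := by
  set O := OddsOf S with hO
  have heS : e ∈ S := (mem_EvensOf.1 he).1
  have heodd : ¬ Odd e := (mem_EvensOf.1 he).2
  have hedvd : 2*m ∣ e := hdvd e heS heodd
  have hepos : 0 < e := by
    rcases Nat.eq_zero_or_pos e with h | h
    · exact absurd (h ▸ heS) h0
    · exact h
  obtain ⟨k, hk⟩ := hedvd
  have hm2 : 0 < 2*m := by omega
  have hk1 : 1 ≤ k := by
    rcases Nat.eq_zero_or_pos k with h | h
    · rw [h, mul_zero] at hk; omega
    · exact h
  have hbcS : bc ∈ S := (mem_OddsOf.1 hbcO).1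
  have hbcodd : Odd bc := (mem_OddsOf.1 hbcO).2
  have hbcpos : 0 < bc := hbcodd.pos
  set y := pred0 O bc with hy
  have hyb : y < bc := by rw [hy]; exact pred0_lt_of_pos hbcpos
  have hbc2m : bc ≤ y + 2*m := by
    by_contra hcon
    refine hbcnv (mem_violOf.2 ⟨hbcO, ?_⟩)
    have hrfl : pred0 (OddsOf S) bc = y := rfl
    omega
  have hbce : bc ≠ e := fun h => heodd (h ▸ hbcodd)
  have hoddz : Odd (bc + e) := hbcodd.add_even ⟨m*k, by rw [hk]; ring⟩
  have hzne : bc + e ∉ S := by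
    intro hzS
    have hzO : bc + e ∈ O := mem_OddsOf.2 ⟨hzS, hoddz⟩
    have := hnoodd _ hzO (by omega)
    omega
  refine ⟨⟨(S.erase bc).erase e, bc, y, k, hm, hk1, hbcodd, hyb,
    (by omega), ?_, ?_, ?_, ?_, ?_, ?_, ?_, ?_, ?_⟩, ?_⟩
  · -- hyR
    by_cases hy0 : y = 0
    · exact Or.inl hy0
    · right
      obtain ⟨hyO, hybc⟩ := pred0_mem_of_ne (hy ▸ hy0)
      rw [← hy] at hybc
      refine ⟨Finset.mem_erase.2 ⟨?_, Finset.mem_erase.2 ⟨by omega, (mem_OddsOf.1 hyO).1⟩⟩,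
        (mem_OddsOf.1 hyO).2⟩
      intro heq
      exact heodd (heq ▸ (mem_OddsOf.1 hyO).2)
  · -- h0R
    intro h
    exact h0 (Finset.mem_of_mem_erase (Finset.mem_of_mem_erase h))
  · -- hzR : bc + 2*m*k ∉ R
    intro h
    rw [show 2*m*k = e from hk.symm] at h
    exact hzne (Finset.mem_of_mem_erase (Finset.mem_of_mem_erase h))
  · -- hbR
    intro h
    exact Finset.notMem_erase _ _ (Finset.mem_of_mem_erase h)
  · -- hgR
    intro h
    rw [show 2*m*k = e from hk.symm] at h
    exact Finset.notMem_erase _ _ h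
  · -- hpred
    intro x hx hxodd hxz
    rw [show 2*m*k = e from hk.symm] at hxz
    have hxS : x ∈ S := Finset.mem_of_mem_erase (Finset.mem_of_mem_erase hx)
    have hxO : x ∈ O := mem_OddsOf.2 ⟨hxS, hxodd⟩
    have hxbc : x ≠ bc := (Finset.mem_erase.1 (Finset.mem_of_mem_erase hx)).1
    rcases lt_or_gt_of_ne hxbc with h | h
    · have := le_pred0 hxO h
      rw [← hy] at this
      exact this
    · have := hnoodd x hxO h
      omega
  · -- hviol
    intro x hx hxodd hxz
    rw [show 2*m*k = e from hk.symm] at hxz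
    have hxS : x ∈ S := Finset.mem_of_mem_erase (Finset.mem_of_mem_erase hx)
    have hxO : x ∈ O := mem_OddsOf.2 ⟨hxS, hxodd⟩
    have hxbc : x ≠ bc := (Finset.mem_erase.1 (Finset.mem_of_mem_erase hx)).1
    have hxlt : x < bc := by
      rcases lt_or_gt_of_ne hxbc with h | h
      · exact h
      · have := hnoodd x hxO h; omega
    have hOR : OddsOf ((S.erase bc).erase e) = (O.erase bc).erase e := by
      rw [OddsOf_erase, OddsOf_erase]
    have heO : e ∉ O.erase bc := by
      intro h
      exact heodd (mem_OddsOf.1 (Finset.mem_of_mem_erase h)).2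
    have hpeq : pred0 (OddsOf ((S.erase bc).erase e)) x = pred0 O x := by
      rw [hOR, Finset.erase_eq_of_notMem heO]
      exact pred0_congr (filter_lt_erase_of_le (by omega))
    rw [hpeq]
    by_contra hcon
    push_neg at hcon
    exact hnvlow x hxO hxlt (mem_violOf.2 ⟨hxO, hcon⟩)
  · -- hEdvd
    intro x hx hxodd
    exact hdvd x (Finset.mem_of_mem_erase (Finset.mem_of_mem_erase hx)) hxodd
  · -- hEg
    intro x hx hxodd
    rw [show 2*m*k = e from hk.symm]
    have hxS : x ∈ S := Finset.mem_of_mem_erase (Finset.mem_of_mem_erase hx)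
    have hxe : x ≠ e := (Finset.mem_erase.1 hx).1
    have := hemin x (mem_EvensOf.2 ⟨hxS, hxodd⟩)
    omega
  · -- S = Sb
    show S = insert bc (insert (2*m*k) ((S.erase bc).erase e))
    rw [show 2*m*k = e from hk.symm,
      Finset.insert_erase (Finset.mem_erase.2 ⟨fun h => hbce h.symm, heS⟩),
      Finset.insert_erase hbcS]

lemma exists_ctx {m : ℕ} (hm : 0 < m) {S : Finset ℕ} (hS : Good m S) :
    ∃ c : Ctx m, S = c.Sf ∨ S = c.Sb := by
  obtain ⟨h0, ⟨a, haS, haodd, hamin⟩, hdvd, hEV⟩ := hS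
  have haO : a ∈ OddsOf S := mem_OddsOf.2 ⟨haS, haodd⟩
  by_cases hE : EvensOf S = ∅
  · -- forward, no evens
    have hV : (violOf m S).Nonempty := by
      rcases hEV with h | h
      · exact absurd hE h
      · exact Finset.nonempty_iff_ne_empty.2 h
    obtain ⟨c, hc⟩ := build_fwd hm h0 hdvd hV (by rw [hE]; intro x hx; exact absurd hx (Finset.notMem_empty _))
    exact ⟨c, Or.inl hc⟩
  · have hEne : (EvensOf S).Nonempty := Finset.nonempty_iff_ne_empty.2 hE
    set e := (EvensOf S).min' hEne with he
    have heE : e ∈ EvensOf S := Finset.min'_mem _ hEne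
    have hemin : ∀ x ∈ EvensOf S, e ≤ x := fun x hx => Finset.min'_le _ _ hx
    by_cases hV : (violOf m S).Nonempty
    · set z₀ := (violOf m S).min' hV with hz₀
      set y₀ := pred0 (OddsOf S) z₀ with hy₀
      set s₀ := (z₀ - y₀ - 1)/(2*m) with hs₀
      have hz₀V : z₀ ∈ violOf m S := Finset.min'_mem _ hV
      have hz₀O : z₀ ∈ OddsOf S := (mem_violOf.1 hz₀V).1
      have hz₀viol : 2*m < z₀ - y₀ := (mem_violOf.1 hz₀V).2
      have hz₀min : ∀ v ∈ violOf m S, z₀ ≤ v := fun v hv => Finset.min'_le _ _ hv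
      have h2m : 0 < 2*m := by omega
      have hsle : 2*m*s₀ ≤ z₀ - y₀ - 1 := by
        rw [hs₀]
        have := Nat.div_add_mod (z₀ - y₀ - 1) (2*m)
        omega
      by_cases hcond : y₀ ≠ 0 ∧ e ≤ 2*m*s₀
      · -- backward with bc = y₀
        obtain ⟨hy0ne, hele⟩ := hcond
        obtain ⟨hy₀O, hy₀z⟩ := pred0_mem_of_ne (hy₀ ▸ hy0ne)
        rw [← hy₀] at hy₀z
        have hbcnv : y₀ ∉ violOf m S := by
          intro h
          have := hz₀min _ h
          omega
        have hnoodd : ∀ x ∈ OddsOf S, y₀ < x → y₀ + e < x := by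
          intro x hxO hxy
          have hxz : z₀ ≤ x := by
            by_contra hcon
            push_neg at hcon
            have := le_pred0 hxO hcon
            rw [← hy₀] at this
            omega
          omega
        have hnvlow : ∀ x ∈ OddsOf S, x < y₀ → x ∉ violOf m S := by
          intro x hxO hxy h
          have := hz₀min _ h
          omega
        obtain ⟨c, hc⟩ := build_bwd hm h0 hdvd heE hemin hy₀O hbcnv hnoodd hnvlow
        exact ⟨c, Or.inr hc⟩
      · -- forward
        have hEbig : ∀ x ∈ EvensOf S,
            2*m*(((violOf m S).min' hV - pred0 (OddsOf S) ((violOf m S).min' hV) - 1)/(2*m)) < x := by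
          intro x hx
          rw [← hz₀, ← hy₀, ← hs₀]
          rcases not_and_or.1 hcond with h | h
          · push_neg at h
            have hxa : a ≤ x := hamin x (mem_EvensOf.1 hx).1
            have haz : z₀ ≤ a := by
              by_contra hcon
              push_neg at hcon
              have h2 := le_pred0 haO hcon
              rw [← hy₀, h] at h2
              have := haodd.pos
              omega
            omega
          · push_neg at h
            have := hemin x hx
            omega
        obtain ⟨c, hc⟩ := build_fwd hm h0 hdvd hV hEbig
        exact ⟨c, Or.inl hc⟩
    · -- backward with bc = max of odds
      have hOne : (OddsOf S).Nonempty := ⟨a, haO⟩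
      have hnv : violOf m S = ∅ := Finset.not_nonempty_iff_eq_empty.1 hV
      have hbcO := Finset.max'_mem _ hOne
      obtain ⟨c, hc⟩ := build_bwd hm h0 hdvd heE hemin hbcO
        (by rw [hnv]; exact Finset.notMem_empty _)
        (fun x hxO hlt => absurd (Finset.le_max' _ _ hxO) (by omega))
        (fun x hxO hlt h => (by rw [hnv] at h; exact Finset.notMem_empty _ h))
      exact ⟨c, Or.inr hc⟩

lemma psi_props {m : ℕ} (hm : 0 < m) {S : Finset ℕ} (hS : Good m S) :
    Good m (psi m S) ∧ psi m (psi m S) = S ∧ (psi m S).sum id = S.sum id ∧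
    (OddsOf (psi m S)).card = (OddsOf S).card ∧
    ((psi m S).card = S.card + 1 ∨ S.card = (psi m S).card + 1) := by
  obtain ⟨c, hc | hc⟩ := exists_ctx hm hS
  · subst hc
    rw [c.psi_Sf]
    exact ⟨c.good_Sb, c.psi_Sb, by rw [c.sum_Sb, c.sum_Sf],
      by rw [c.oddcard_Sb, c.oddcard_Sf], Or.inl (by rw [c.card_Sb, c.card_Sf])⟩
  · subst hc
    rw [c.psi_Sb]
    exact ⟨c.good_Sf, c.psi_Sf, by rw [c.sum_Sb, c.sum_Sf],
      by rw [c.oddcard_Sb, c.oddcard_Sf], Or.inr (by rw [c.card_Sb, c.card_Sf])⟩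

lemma getD_eq_getElem {l : List ℕ} {i : ℕ} (h : i < l.length) : l.getD i 0 = l[i] := by
  rw [List.getD_eq_getElem?_getD, List.getElem?_eq_getElem h, Option.getD_some]

lemma getD_oob {l : List ℕ} {i : ℕ} (h : l.length ≤ i) : l.getD i 0 = 0 := by
  rw [List.getD_eq_getElem?_getD, List.getElem?_eq_none h, Option.getD_none]

lemma descList_iff {S : Finset ℕ} {cbd : ℕ} :
    (∀ i < S.card, (descList S).getD i 0 - (descList S).getD (i+1) 0 ≤ cbd) ↔
    (∀ x ∈ S, x - pred0 S x ≤ cbd) := by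
  have hdesc : descList S = (S.sort (· ≤ ·)).reverse := rfl
  set l := S.sort (· ≤ ·) with hl
  have hlen : l.length = S.card := Finset.length_sort _
  have hsort : l.SortedLT := Finset.sortedLT_sort S
  have hmem : ∀ x, x ∈ l ↔ x ∈ S := fun x => Finset.mem_sort _
  have hmono : ∀ (i j : ℕ) (hi : i < l.length) (hj : j < l.length), i < j → l[i] < l[j] :=
    fun i j hi hj hij => hsort.getElem_lt_getElem_of_lt hij
  have hmonoD : ∀ i j, i < j → j < l.length → l.getD i 0 < l.getD j 0 := by
    intro i j hij hj
    rw [getD_eq_getElem (by omega), getD_eq_getElem hj]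
    exact hmono i j (by omega) hj hij
  have hgd : ∀ i, i < l.length → l.getD i 0 ∈ S := by
    intro i h
    rw [getD_eq_getElem h]
    exact (hmem _).1 (List.getElem_mem _)
  have hrevD : ∀ i, i < l.length → (l.reverse).getD i 0 = l.getD (l.length - 1 - i) 0 := by
    intro i hi
    have h1 : i < l.reverse.length := by rwa [List.length_reverse]
    rw [getD_eq_getElem h1, List.getElem_reverse, getD_eq_getElem (by omega)]
  have hpred0' : ∀ (h0 : 0 < l.length), pred0 S (l.getD 0 0) = 0 := by
    intro h0
    apply pred0_eq_zero
    intro t ht htl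
    obtain ⟨i, hi, rfl⟩ := List.mem_iff_getElem.1 ((hmem t).2 ht)
    rw [← getD_eq_getElem hi] at htl
    rcases Nat.eq_zero_or_pos i with h | h
    · subst h; omega
    · exact absurd (hmonoD 0 i h hi) (by omega)
  have hpredj' : ∀ j, j + 1 < l.length → pred0 S (l.getD (j+1) 0) = l.getD j 0 := by
    intro j hj
    apply pred0_eq (hgd j (by omega)) (hmonoD j (j+1) (by omega) hj)
    intro t ht htl
    obtain ⟨i, hi, rfl⟩ := List.mem_iff_getElem.1 ((hmem t).2 ht)
    rw [← getD_eq_getElem hi] at htl ⊢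
    rcases Nat.lt_or_ge i (j+1) with h | h
    · rcases Nat.lt_or_ge i j with h2 | h2
      · exact le_of_lt (hmonoD i j h2 (by omega))
      · have : i = j := by omega
        subst this; exact le_refl _
    · rcases Nat.eq_or_lt_of_le h with heq | hlt
      · rw [← heq] at htl; omega
      · exact absurd (hmonoD (j+1) i hlt hi) (by omega)
  rw [hdesc]
  constructor
  · intro H x hx
    obtain ⟨j, hj, hxj⟩ := List.mem_iff_getElem.1 ((hmem x).2 hx)
    have hxD : x = l.getD j 0 := by rw [getD_eq_getElem hj, hxj]
    have H' := H (S.card - 1 - j) (by omega)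
    rw [hrevD _ (by omega), (show l.length - 1 - (S.card - 1 - j) = j by omega)] at H'
    rcases Nat.eq_zero_or_pos j with h0 | h0
    · subst h0
      rw [getD_oob (l := l.reverse) (by rw [List.length_reverse]; omega)] at H'
      rw [hxD, hpred0' (by omega)]
      omega
    · rw [hrevD _ (by omega),
        (show l.length - 1 - (S.card - 1 - j + 1) = j - 1 by omega)] at H'
      have hp := hpredj' (j-1) (by omega)
      rw [(show j - 1 + 1 = j by omega)] at hp
      rw [hxD, hp]
      omega
  · intro H i hi
    obtain ⟨j, hjdef⟩ : ∃ j, j = l.length - 1 - i := ⟨_, rfl⟩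
    have hjl : j < l.length := by omega
    have hx := H (l.getD j 0) (hgd j hjl)
    rw [hrevD i (by omega), ← hjdef]
    rcases Nat.eq_zero_or_pos j with h0 | h0
    · rw [getD_oob (show l.reverse.length ≤ i+1 by rw [List.length_reverse]; omega)]
      rw [h0] at hx ⊢
      rw [hpred0' (by omega)] at hx
      omega
    · rw [hrevD (i+1) (by omega), (show l.length - 1 - (i+1) = j - 1 by omega)]
      have hp := hpredj' (j-1) (by omega)
      rw [(show j - 1 + 1 = j by omega)] at hp
      rw [hp] at hx
      exact hx

open Polynomial

noncomputable def wA (S : Finset ℕ) : Polynomial ℤ :=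
  (-1) ^ (S.card - 1) * Polynomial.X ^ ((OddsOf S).card)

noncomputable def wC (S : Finset ℕ) : Polynomial ℤ :=
  (-1) ^ S.card * Polynomial.X ^ ((OddsOf S).card)

open scoped Classical in
noncomputable def Cfin (m n : ℕ) : Finset (Finset ℕ) :=
  (Finset.range (n+1)).powerset.filter
    (fun S => S.sum id = n ∧ 0 ∉ S ∧ GoodMin S ∧ ∀ x ∈ S, ¬ Odd x → 2*m ∣ x)

lemma subset_range_of_sum {S : Finset ℕ} {n : ℕ} (h : S.sum id = n) :
    S ⊆ Finset.range (n+1) := by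
  intro x hx
  rw [Finset.mem_range]
  have h2 := Finset.single_le_sum (f := (id : ℕ → ℕ)) (fun i _ => Nat.zero_le _) hx
  rw [h] at h2
  simp only [id_eq] at h2
  omega

lemma mem_Cfin {m n : ℕ} {S : Finset ℕ} :
    S ∈ Cfin m n ↔ S.sum id = n ∧ 0 ∉ S ∧ GoodMin S ∧ ∀ x ∈ S, ¬ Odd x → 2*m ∣ x := by
  classical
  unfold Cfin
  rw [Finset.mem_filter, Finset.mem_powerset]
  exact ⟨fun h => h.2, fun h => ⟨subset_range_of_sum h.1, h⟩⟩

lemma mem_Bset {m n : ℕ} {S : Finset ℕ} :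
    S ∈ Bset m n ↔ S.sum id = n ∧ (∀ x ∈ S, Odd x) ∧ (∀ x ∈ S, x - pred0 S x ≤ 2*m) := by
  unfold Bset
  rw [Finset.mem_filter, Finset.mem_powerset]
  constructor
  · rintro ⟨-, h1, h2, h3⟩
    exact ⟨h1, h2, descList_iff.1 h3⟩
  · rintro ⟨h1, h2, h3⟩
    exact ⟨subset_range_of_sum h1, h1, h2, descList_iff.2 h3⟩

lemma mem_Aset {m n : ℕ} {S : Finset ℕ} :
    S ∈ Aset m n ↔ S.sum id = n ∧ (∃ a ∈ S, Even a ∧ ∀ x ∈ S, a ≤ x) ∧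
      (∀ x ∈ S, Even x → 2*m ∣ x) := by
  unfold Aset
  rw [Finset.mem_filter, Finset.mem_powerset]
  exact ⟨fun h => h.2, fun h => ⟨subset_range_of_sum h.1, h⟩⟩

lemma odds_erase_zero {S : Finset ℕ} : OddsOf (S.erase 0) = OddsOf S := by
  rw [OddsOf_erase]
  apply Finset.erase_eq_of_notMem
  intro h
  exact (by decide : ¬ Odd 0) (mem_OddsOf.1 h).2

lemma odds_insert_zero {S : Finset ℕ} : OddsOf (insert 0 S) = OddsOf S :=
  OddsOf_insert_even (by decide)

lemma card_ge_two {S : Finset ℕ} {n : ℕ} (hn : 1 ≤ n) (hsum : S.sum id = n)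
    (h0 : 0 ∈ S) : 2 ≤ S.card := by
  have hx : ∃ x ∈ S, x ≠ 0 := by
    by_contra hcon
    push_neg at hcon
    have : S.sum id = 0 := Finset.sum_eq_zero (fun x hx => hcon x hx)
    omega
  obtain ⟨x, hxS, hx0⟩ := hx
  exact Finset.one_lt_card.2 ⟨0, h0, x, hxS, fun h => hx0 h.symm⟩

lemma not_goodmin_of_aset {m n : ℕ} {S : Finset ℕ} (hS : S ∈ Aset m n) (h0 : 0 ∉ S) :
    ¬ GoodMin S := by
  rintro ⟨a', ha'S, ha'odd, ha'min⟩
  obtain ⟨-, ⟨a, haS, haeven, hamin⟩, -⟩ := mem_Aset.1 hS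
  have : a = a' := le_antisymm (hamin a' ha'S) (ha'min a haS)
  rw [this] at haeven
  exact (Nat.not_odd_iff_even.2 haeven) ha'odd

lemma stepA (m n : ℕ) (hm : 0 < m) (hn : 1 ≤ n) :
    ∑ S ∈ Aset m n, wA S = ∑ S ∈ Cfin m n, wC S := by
  classical
  have hsplit := Finset.sum_filter_add_sum_filter_not (Aset m n)
    (fun S => 0 ∈ S ∧ GoodMin (S.erase 0)) wA
  have hzero : ∑ S ∈ (Aset m n).filter
      (fun S => ¬(0 ∈ S ∧ GoodMin (S.erase 0))), wA S = 0 := by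
    apply Finset.sum_involution
      (g := fun S _ => if 0 ∈ S then S.erase 0 else insert 0 S)
    · -- weights cancel
      intro S hS
      rw [Finset.mem_filter] at hS
      obtain ⟨hSA, hSp⟩ := hS
      obtain ⟨hsum, ⟨a, haS, haeven, hamin⟩, hdvd⟩ := mem_Aset.1 hSA
      by_cases h0 : 0 ∈ S
      · rw [if_pos h0]
        have hc := card_ge_two hn hsum h0
        unfold wA
        rw [Finset.card_erase_of_mem h0, odds_erase_zero]
        have h2 : S.card - 1 - 1 = S.card - 2 := by omega
        have h1 : S.card - 1 = (S.card - 2) + 1 := by omega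
        rw [h2, h1, pow_succ]
        ring
      · rw [if_neg h0]
        have hc : 1 ≤ S.card := Finset.card_pos.2 ⟨a, haS⟩
        unfold wA
        rw [Finset.card_insert_of_notMem h0, odds_insert_zero]
        have h1 : S.card + 1 - 1 = (S.card - 1) + 1 := by omega
        rw [h1, pow_succ]
        ring
    · -- g S ≠ S
      intro S hS _
      by_cases h0 : 0 ∈ S
      · rw [if_pos h0]
        intro heq
        have := Finset.notMem_erase 0 S
        rw [heq] at this
        exact this h0
      · rw [if_neg h0]
        intro heq
        have := Finset.mem_insert_self 0 S
        rw [heq] at this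
        exact h0 this
    · -- involutive
      intro S hS
      by_cases h0 : 0 ∈ S
      · rw [if_pos h0, if_neg (Finset.notMem_erase 0 S), Finset.insert_erase h0]
      · rw [if_neg h0, if_pos (Finset.mem_insert_self 0 S), Finset.erase_insert h0]
    · -- g S mem
      intro S hS
      rw [Finset.mem_filter] at hS ⊢
      obtain ⟨hSA, hSp⟩ := hS
      obtain ⟨hsum, ⟨a, haS, haeven, hamin⟩, hdvd⟩ := mem_Aset.1 hSA
      by_cases h0 : 0 ∈ S
      · rw [if_pos h0]
        have hngm : ¬ GoodMin (S.erase 0) := fun h => hSp ⟨h0, h⟩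
        have hc := card_ge_two hn hsum h0
        have hne : (S.erase 0).Nonempty := by
          rw [← Finset.card_pos, Finset.card_erase_of_mem h0]
          omega
        have hsum' : (S.erase 0).sum id = n := by
          rw [Finset.sum_erase _ (by simp : (id 0 : ℕ) = 0)]
          exact hsum
        constructor
        · rw [mem_Aset]
          refine ⟨hsum', ?_, fun x hx hxe => hdvd x (Finset.mem_of_mem_erase hx) hxe⟩
          set a' := (S.erase 0).min' hne with ha'
          have ha'mem := Finset.min'_mem _ hne
          have ha'min : ∀ x ∈ S.erase 0, a' ≤ x := fun x hx => Finset.min'_le _ _ hx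
          have ha'even : Even a' := by
            by_contra hcon
            exact hngm ⟨a', ha'mem, Nat.not_even_iff_odd.1 hcon, ha'min⟩
          exact ⟨a', ha'mem, ha'even, ha'min⟩
        · intro hcon
          exact Finset.notMem_erase 0 S hcon.1
      · rw [if_neg h0]
        constructor
        · rw [mem_Aset]
          refine ⟨?_, ⟨0, Finset.mem_insert_self _ _, Even.zero, fun x _ => Nat.zero_le _⟩, ?_⟩
          · rw [Finset.sum_insert h0]
            simpa using hsum
          · intro x hx hxe
            rcases Finset.mem_insert.1 hx with rfl | hx
            · exact dvd_zero _
            · exact hdvd x hx hxe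
        · rintro ⟨-, hgm⟩
          rw [Finset.erase_insert h0] at hgm
          exact not_goodmin_of_aset hSA h0 hgm
  rw [← hsplit, hzero, add_zero]
  refine Finset.sum_bij' (fun S _ => S.erase 0) (fun T _ => insert 0 T) ?_ ?_ ?_ ?_ ?_
  · -- hi : erase mem Cfin
    intro S hS
    rw [Finset.mem_filter] at hS
    obtain ⟨hSA, h0S, hgm⟩ := hS
    obtain ⟨hsum, -, hdvd⟩ := mem_Aset.1 hSA
    rw [mem_Cfin]
    refine ⟨?_, Finset.notMem_erase 0 S, hgm, ?_⟩
    · rw [Finset.sum_erase _ (by simp : (id 0 : ℕ) = 0)]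
      exact hsum
    · intro x hx hxo
      exact hdvd x (Finset.mem_of_mem_erase hx) (Nat.not_odd_iff_even.1 hxo)
  · -- hj : insert mem filter
    intro T hT
    obtain ⟨hsum, h0T, hgm, hdvd⟩ := mem_Cfin.1 hT
    rw [Finset.mem_filter]
    refine ⟨?_, Finset.mem_insert_self _ _, ?_⟩
    · rw [mem_Aset]
      refine ⟨?_, ⟨0, Finset.mem_insert_self _ _, Even.zero, fun x _ => Nat.zero_le _⟩, ?_⟩
      · rw [Finset.sum_insert h0T]
        simpa using hsum
      · intro x hx hxe
        rcases Finset.mem_insert.1 hx with rfl | hx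
        · exact dvd_zero _
        · exact hdvd x hx (Nat.not_odd_iff_even.2 hxe)
    · rw [Finset.erase_insert h0T]
      exact hgm
  · intro S hS
    rw [Finset.mem_filter] at hS
    exact Finset.insert_erase hS.2.1
  · intro T hT
    exact Finset.erase_insert (mem_Cfin.1 hT).2.1
  · -- weights
    intro S hS
    rw [Finset.mem_filter] at hS
    unfold wA wC
    rw [Finset.card_erase_of_mem hS.2.1, odds_erase_zero]

lemma Bsub {m n : ℕ} (hn : 1 ≤ n) : Bset m n ⊆ Cfin m n := by
  intro S hS
  obtain ⟨hsum, hodd, hgap⟩ := mem_Bset.1 hS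
  have hne : S.Nonempty := by
    rw [Finset.nonempty_iff_ne_empty]
    rintro rfl
    simp at hsum
    omega
  rw [mem_Cfin]
  refine ⟨hsum, fun h => (by decide : ¬ Odd 0) (hodd 0 h), ?_, ?_⟩
  · exact ⟨S.min' hne, Finset.min'_mem _ _, hodd _ (Finset.min'_mem _ _),
      fun x hx => Finset.min'_le _ _ hx⟩
  · intro x hx hxo
    exact absurd (hodd x hx) hxo

lemma good_of_mem_sdiff {m n : ℕ} {S : Finset ℕ} (hS : S ∈ Cfin m n \ Bset m n) :
    Good m S := by
  rw [Finset.mem_sdiff] at hS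
  obtain ⟨hC, hB⟩ := hS
  obtain ⟨hsum, h0, hgm, hdvd⟩ := mem_Cfin.1 hC
  refine ⟨h0, hgm, hdvd, ?_⟩
  by_contra hcon
  push_neg at hcon
  obtain ⟨hE, hV⟩ := hcon
  apply hB
  rw [mem_Bset]
  have hodd : ∀ x ∈ S, Odd x := by
    intro x hx
    by_contra hxo
    have : x ∈ EvensOf S := mem_EvensOf.2 ⟨hx, hxo⟩
    rw [hE] at this
    exact absurd this (Finset.notMem_empty _)
  have hOS : OddsOf S = S := Finset.filter_true_of_mem hodd
  refine ⟨hsum, hodd, ?_⟩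
  intro x hx
  by_contra hgap
  push_neg at hgap
  have : x ∈ violOf m S := mem_violOf.2 ⟨by rw [hOS]; exact hx, by rw [hOS]; omega⟩
  rw [hV] at this
  exact absurd this (Finset.notMem_empty _)

lemma notB_of_good {m n : ℕ} {S : Finset ℕ} (hG : Good m S) : S ∉ Bset m n := by
  intro hB
  obtain ⟨-, hodd, hgap⟩ := mem_Bset.1 hB
  have hOS : OddsOf S = S := Finset.filter_true_of_mem hodd
  rcases hG.2.2.2 with hE | hV
  · apply hE
    rw [Finset.eq_empty_iff_forall_notMem]
    intro x hx
    exact (mem_EvensOf.1 hx).2 (hodd x (mem_EvensOf.1 hx).1)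
  · apply hV
    rw [Finset.eq_empty_iff_forall_notMem]
    intro x hx
    obtain ⟨hxO, hxv⟩ := mem_violOf.1 hx
    rw [hOS] at hxO hxv
    exact absurd (hgap x hxO) (by omega)

lemma sum_sdiff_zero {m n : ℕ} (hm : 0 < m) :
    ∑ S ∈ Cfin m n \ Bset m n, wC S = 0 := by
  classical
  apply Finset.sum_involution (g := fun S _ => psi m S)
  · -- weights cancel
    intro S hS
    obtain ⟨hG', hinv, hsum', hoddc, hcard⟩ := psi_props hm (good_of_mem_sdiff hS)
    unfold wC
    rw [hoddc]
    rcases hcard with h | h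
    · rw [h, pow_succ]; ring
    · rw [h, pow_succ]; ring
  · -- psi S ≠ S
    intro S hS _
    obtain ⟨hG', hinv, hsum', hoddc, hcard⟩ := psi_props hm (good_of_mem_sdiff hS)
    intro heq
    rw [heq] at hcard
    omega
  · -- mem
    intro S hS
    obtain ⟨hG', hinv, hsum', hoddc, hcard⟩ := psi_props hm (good_of_mem_sdiff hS)
    rw [Finset.mem_sdiff] at hS ⊢
    obtain ⟨hC, hB⟩ := hS
    obtain ⟨hsum, h0, hgm, hdvd⟩ := mem_Cfin.1 hC
    constructor
    · rw [mem_Cfin]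
      exact ⟨by rw [hsum']; exact hsum, hG'.1, hG'.2.1, hG'.2.2.1⟩
    · exact notB_of_good hG'

  · -- involutive
    intro S hS
    exact (psi_props hm (good_of_mem_sdiff hS)).2.1
lemma sum_B_eq {m n : ℕ} :
    ∑ S ∈ Bset m n, wC S = ∑ S ∈ Bset m n, (-(Polynomial.X : Polynomial ℤ))^S.card := by
  apply Finset.sum_congr rfl
  intro S hS
  obtain ⟨-, hodd, -⟩ := mem_Bset.1 hS
  have hOS : OddsOf S = S := Finset.filter_true_of_mem hodd
  unfold wC
  rw [hOS, neg_pow (Polynomial.X : Polynomial ℤ) S.card]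

end BU


open scoped Classical in
/-- `∑_{λ ∈ A_m(n)} (-1)^{ℓ(λ)-1} a^{ℓ_o(λ)} = ∑_{μ ∈ B_m(n)} (-a)^{ℓ(μ)}`
as polynomials in `a`. -/
theorem weighted_A_eq_weighted_B (m n : ℕ) (hm : 0 < m) (hn : 1 ≤ n) :
    ∑ S ∈ Aset m n,
      (-1 : Polynomial ℤ) ^ (S.card - 1) *
        Polynomial.X ^ ((S.filter (fun x => Odd x)).card) =
    ∑ S ∈ Bset m n, (-(Polynomial.X : Polynomial ℤ)) ^ S.card := by
  have h1 : ∀ S : Finset ℕ,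
      (-1 : Polynomial ℤ) ^ (S.card - 1) *
        Polynomial.X ^ ((S.filter (fun x => Odd x)).card) = BU.wA S := by
    intro S
    unfold BU.wA BU.OddsOf
    rfl
  calc ∑ S ∈ Aset m n,
      (-1 : Polynomial ℤ) ^ (S.card - 1) *
        Polynomial.X ^ ((S.filter (fun x => Odd x)).card)
      = ∑ S ∈ Aset m n, BU.wA S := Finset.sum_congr rfl (fun S _ => h1 S)
    _ = ∑ S ∈ BU.Cfin m n, BU.wC S := BU.stepA m n hm hn
    _ = ∑ S ∈ BU.Cfin m n \ Bset m n, BU.wC S + ∑ S ∈ Bset m n, BU.wC S :=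
        (Finset.sum_sdiff (BU.Bsub hn)).symm
    _ = ∑ S ∈ Bset m n, BU.wC S := by rw [BU.sum_sdiff_zero hm, zero_add]
    _ = ∑ S ∈ Bset m n, (-(Polynomial.X : Polynomial ℤ))^S.card := BU.sum_B_eq
end

section
/- For every positive integer k, the generating function for partitions into k distinct parts with smallest part equal to 1 and consecutive differences at most 2 is (-q;q)_{k-1} q^{k(k+1)/2}; that is, the number of such partitions of n equals the number of partitions of n - k(k+1)/2 into distinct parts each at most k-1. -/
namespace Dk

variable (k : ℕ)

/-- counting function -/
def c (T : Finset ℕ) (i : ℕ) : ℕ := (T.filter (fun t => k - i ≤ t)).card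

/-- the i-th smallest part -/
def a (T : Finset ℕ) (i : ℕ) : ℕ := i + 1 + c k T i

lemma c_mono (T : Finset ℕ) : Monotone (c k T) := by
  intro i j hij
  apply Finset.card_le_card
  apply Finset.monotone_filter_right
  intro t _ ht
  exact le_trans (Nat.sub_le_sub_left hij k) ht

lemma a_strictMono (T : Finset ℕ) : StrictMono (a k T) := fun i j h =>
  Nat.add_lt_add_of_lt_of_le (by omega) (c_mono k T h.le)

lemma c_succ_le (T : Finset ℕ) (i : ℕ) : c k T (i + 1) ≤ c k T i + 1 := by
  have : T.filter (fun t => k - (i+1) ≤ t) ⊆ insert (k - (i+1)) (T.filter (fun t => k - i ≤ t)) := by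
    intro t ht
    simp only [Finset.mem_filter] at ht
    rcases eq_or_lt_of_le ht.2 with h | h
    · simp [← h]
    · simp only [Finset.mem_insert, Finset.mem_filter]
      exact Or.inr ⟨ht.1, by omega⟩
  calc c k T (i+1) ≤ (insert (k - (i+1)) (T.filter (fun t => k - i ≤ t))).card :=
        Finset.card_le_card this
    _ ≤ c k T i + 1 := Finset.card_insert_le _ _

lemma c_zero (hk : 0 < k) {T : Finset ℕ} (hT : T ⊆ Finset.Icc 1 (k - 1)) : c k T 0 = 0 := by
  rw [c, Finset.card_eq_zero, Finset.filter_eq_empty_iff]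
  intro t ht
  have := hT ht
  simp only [Finset.mem_Icc] at this
  omega

lemma a_zero (hk : 0 < k) {T : Finset ℕ} (hT : T ⊆ Finset.Icc 1 (k - 1)) : a k T 0 = 1 := by
  simp [a, c_zero k hk hT]

lemma sum_a (hk : 0 < k) {T : Finset ℕ} (hT : T ⊆ Finset.Icc 1 (k - 1)) :
    ∑ i ∈ Finset.range k, a k T i = k * (k + 1) / 2 + T.sum id := by
  have h1 : ∑ i ∈ Finset.range k, (i + 1) = k * (k + 1) / 2 := by
    have h := Finset.sum_range_id_mul_two (k + 1)
    rw [Finset.sum_range_succ'] at h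
    have hc : (k + 1) * (k + 1 - 1) = k * (k + 1) := by
      simp [Nat.mul_comm]
    omega
  have h2 : ∑ i ∈ Finset.range k, c k T i = T.sum id := by
    simp only [c, Finset.card_filter]
    rw [Finset.sum_comm]
    apply Finset.sum_congr rfl
    intro t ht
    have htk : 1 ≤ t ∧ t ≤ k - 1 := Finset.mem_Icc.mp (hT ht)
    have : ∀ i ∈ Finset.range k, (if k - i ≤ t then 1 else 0) = if k - t ≤ i then 1 else 0 := by
      intro i hi
      simp only [Finset.mem_range] at hi
      congr 1
      simp only [eq_iff_iff]
      omega
    rw [Finset.sum_congr rfl this, ← Finset.card_filter]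
    have : (Finset.range k).filter (fun x => k - t ≤ x) = Finset.Ico (k - t) k := by
      ext x
      simp only [Finset.mem_filter, Finset.mem_range, Finset.mem_Ico]
      omega
    rw [this, Nat.card_Ico]
    simp only [id]
    omega
  simp only [a]
  rw [Finset.sum_add_distrib, h1, h2]

/-- the image finset -/
def g (T : Finset ℕ) : Finset ℕ := Finset.image (a k T) (Finset.range k)

lemma sort_g (T : Finset ℕ) : (g k T).sort (· ≤ ·) = (List.range k).map (a k T) := by
  have hnd : ((List.range k).map (a k T)).Nodup :=
    (List.nodup_range (n := k)).map (a_strictMono k T).injective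
  have hs : ((List.range k).map (a k T)).Pairwise (· ≤ ·) := by
    rw [List.pairwise_map]
    exact (List.pairwise_lt_range (n := k)).imp (fun h => ((a_strictMono k T) h).le)
  have h2 := (List.toFinset_sort (· ≤ ·) hnd).mpr hs
  have h3 : g k T = ((List.range k).map (a k T)).toFinset := by
    ext x
    simp [g, List.mem_map, List.mem_range, Finset.mem_image]
  rw [h3, h2]

lemma card_g (T : Finset ℕ) : (g k T).card = k := by
  rw [g, Finset.card_image_of_injective _ (a_strictMono k T).injective, Finset.card_range]

lemma descList_g_getD (T : Finset ℕ) (i : ℕ) (hi : i < k) :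
    (descList (g k T)).getD i 0 = a k T (k - 1 - i) := by
  have hlen : ((g k T).sort (· ≤ ·)).length = k := by
    rw [Finset.length_sort, card_g]
  rw [descList, List.getD_eq_getElem _ _ (by rw [List.length_reverse, hlen]; exact hi),
    List.getElem_reverse]
  simp only [sort_g, List.getElem_map, List.getElem_range]
  congr 1
  simp only [List.length_map, List.length_range]

lemma c_succ (T : Finset ℕ) {i : ℕ} (h : i < k) :
    c k T (i + 1) = c k T i + (if k - (i + 1) ∈ T then 1 else 0) := by
  classical
  have hset : T.filter (fun t => k - (i + 1) ≤ t) =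
      T.filter (fun t => k - i ≤ t) ∪ T.filter (fun t => t = k - (i + 1)) := by
    ext t
    simp only [Finset.mem_filter, Finset.mem_union, ← and_or_left]
    refine and_congr_right fun _ => ?_
    omega
  have hdisj : Disjoint (T.filter (fun t => k - i ≤ t)) (T.filter (fun t => t = k - (i + 1))) := by
    rw [Finset.disjoint_left]
    intro x hx hx'
    simp only [Finset.mem_filter] at hx hx'
    omega
  rw [c, hset, Finset.card_union_of_disjoint hdisj, Finset.filter_eq']
  by_cases hm : k - (i + 1) ∈ T <;> simp [hm, c]

lemma descList_getD (S : Finset ℕ) (i : ℕ) (hi : i < S.card) :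
    (descList S).getD i 0 = (S.sort (· ≤ ·)).getD (S.card - 1 - i) 0 := by
  have hlen : ((S.sort (· ≤ ·))).length = S.card := Finset.length_sort _
  rw [descList, List.getD_eq_getElem _ _ (by rw [List.length_reverse, hlen]; exact hi),
    List.getElem_reverse, List.getD_eq_getElem _ _ (by omega)]
  congr 1
  omega

end Dk

open scoped Classical in
/-- The number of partitions of `n` into `k` distinct parts with smallest part `1` and
consecutive differences at most `2` equals the number of partitions of `n - k(k+1)/2`
into distinct parts each at most `k - 1`; i.e. the generating function of the former is
`(-q;q)_{k-1} q^{k(k+1)/2}`. -/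
theorem D_k_generating_function (k n : ℕ) (hk : 0 < k) (hn : k * (k + 1) / 2 ≤ n) :
    (((Finset.range (n + 1)).powerset.filter
      (fun S => S.sum id = n ∧ S.card = k ∧ 0 ∉ S ∧ 1 ∈ S ∧
        ∀ i, i + 1 < k →
          (descList S).getD i 0 - (descList S).getD (i + 1) 0 ≤ 2)).card) =
    ((Finset.Icc 1 (k - 1)).powerset.filter
      (fun T => T.sum id = n - k * (k + 1) / 2)).card := by
  classical
  rw [eq_comm]
  refine Finset.card_bij (fun T _ => Dk.g k T) ?_ ?_ ?_
  · -- well-defined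
    intro T hT
    simp only [Finset.mem_filter, Finset.mem_powerset] at hT
    obtain ⟨hTsub, hTsum⟩ := hT
    have hsum : ∑ i ∈ Finset.range k, Dk.a k T i = n := by
      rw [Dk.sum_a k hk hTsub, hTsum]
      omega
    have hle : ∀ i ∈ Finset.range k, Dk.a k T i ≤ n := fun i hi =>
      hsum ▸ Finset.single_le_sum (fun _ _ => Nat.zero_le _) hi
    have hinj : ∀ x ∈ Finset.range k, ∀ y ∈ Finset.range k,
        Dk.a k T x = Dk.a k T y → x = y := fun x _ y _ h =>
      (Dk.a_strictMono k T).injective h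
    simp only [Finset.mem_filter, Finset.mem_powerset]
    refine ⟨?_, ?_, Dk.card_g k T, ?_, ?_, ?_⟩
    · intro x hx
      obtain ⟨i, hi, rfl⟩ := Finset.mem_image.mp hx
      exact Finset.mem_range.mpr (by have := hle i hi; omega)
    · rw [Dk.g, Finset.sum_image hinj]
      simpa using hsum
    · intro h0
      obtain ⟨i, _, hia⟩ := Finset.mem_image.mp h0
      simp only [Dk.a] at hia
      omega
    · exact Finset.mem_image.mpr ⟨0, Finset.mem_range.mpr hk, Dk.a_zero k hk hTsub⟩
    · intro i hik
      have h1 : (descList (Dk.g k T)).getD i 0 = Dk.a k T (k - 1 - i) :=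
        Dk.descList_g_getD k T i (by omega)
      have h2 : (descList (Dk.g k T)).getD (i + 1) 0 = Dk.a k T (k - 1 - (i + 1)) :=
        Dk.descList_g_getD k T (i + 1) hik
      have hidx : k - 1 - i = (k - 1 - (i + 1)) + 1 := by omega
      have hcle := Dk.c_succ_le k T (k - 1 - (i + 1))
      rw [h1, h2, hidx]
      simp only [Dk.a]
      omega
  · -- injective
    intro T1 hT1 T2 hT2 heq
    simp only [Finset.mem_filter, Finset.mem_powerset] at hT1 hT2
    have heq' : Dk.g k T1 = Dk.g k T2 := heq
    have hs : (List.range k).map (Dk.a k T1) = (List.range k).map (Dk.a k T2) := by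
      rw [← Dk.sort_g, ← Dk.sort_g, heq']
    have hpt : ∀ i, i < k → Dk.a k T1 i = Dk.a k T2 i := by
      intro i hi
      have e := congrArg (fun l => l.getD i 0) hs
      simpa only [List.getD_eq_getElem _ _
        (by simp [hi] : i < ((List.range k).map (Dk.a k T1)).length),
        List.getD_eq_getElem _ _
        (by simp [hi] : i < ((List.range k).map (Dk.a k T2)).length),
        List.getElem_map, List.getElem_range] using e
    have hc : ∀ i, i < k → Dk.c k T1 i = Dk.c k T2 i := by
      intro i hi
      have := hpt i hi
      simp only [Dk.a] at this
      omega
    ext t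
    by_cases hm : t ∈ Finset.Icc 1 (k - 1)
    · have htk : 1 ≤ t ∧ t ≤ k - 1 := Finset.mem_Icc.mp hm
      have hik : k - t - 1 < k := by omega
      have e1 := Dk.c_succ k T1 hik
      have e2 := Dk.c_succ k T2 hik
      have hkk : k - (k - t - 1 + 1) = t := by omega
      rw [hkk] at e1 e2
      have hc1 := hc (k - t - 1) hik
      have hc2 := hc (k - t - 1 + 1) (by omega)
      by_cases m1 : t ∈ T1 <;> by_cases m2 : t ∈ T2 <;>
        simp only [m1, m2, if_true, if_false, iff_true, iff_false] at e1 e2 ⊢ <;>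
        first
          | rfl
          | omega
    · constructor
      · intro h; exact absurd (hT1.1 h) hm
      · intro h; exact absurd (hT2.1 h) hm
  · -- surjective
    intro S hS
    simp only [Finset.mem_filter, Finset.mem_powerset] at hS
    obtain ⟨hSsub, hSsum, hScard, hS0, hS1, hSd⟩ := hS
    set l := S.sort (· ≤ ·) with hl
    have hlen : l.length = k := by rw [hl, Finset.length_sort, hScard]
    have hmeml : ∀ i, i < k → l.getD i 0 ∈ S := by
      intro i h
      rw [List.getD_eq_getElem _ _ (by omega)]
      exact (Finset.mem_sort _).mp (List.getElem_mem _)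
    have hpos : ∀ i, i < k → 1 ≤ l.getD i 0 := by
      intro i h
      rcases Nat.eq_zero_or_pos (l.getD i 0) with he | he
      · exact absurd (he ▸ hmeml i h) hS0
      · exact he
    have hSne : S.Nonempty := ⟨1, hS1⟩
    have hmin : S.min' hSne = 1 :=
      le_antisymm (Finset.min'_le S 1 hS1)
        (Finset.le_min' _ _ _ fun y hy => Nat.pos_of_ne_zero fun e => hS0 (e ▸ hy))
    have hzero : l.getD 0 0 = 1 := by
      rw [List.getD_eq_getElem _ _ (by omega), Finset.sorted_zero_eq_min']
      exact hmin
    have hsorted : List.Pairwise (· < ·) l := List.sortedLT_iff_pairwise.mp (Finset.sortedLT_sort S)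
    have hstep : ∀ i, i + 1 < k →
        l.getD i 0 < l.getD (i + 1) 0 ∧ l.getD (i + 1) 0 ≤ l.getD i 0 + 2 := by
      intro i hik
      have hlt : l.getD i 0 < l.getD (i + 1) 0 := by
        rw [List.getD_eq_getElem l 0 (show i < l.length by omega),
          List.getD_eq_getElem l 0 (show i + 1 < l.length by omega)]
        exact List.pairwise_iff_getElem.mp hsorted i (i + 1) (by omega) (by omega) (by omega)
      refine ⟨hlt, ?_⟩
      have hd := hSd (k - 2 - i) (by omega)
      have hd1 : (descList S).getD (k - 2 - i) 0 = l.getD (i + 1) 0 := by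
        rw [Dk.descList_getD S _ (by omega), hScard, ← hl]
        congr 1
        omega
      have hd2 : (descList S).getD (k - 2 - i + 1) 0 = l.getD i 0 := by
        rw [Dk.descList_getD S _ (by omega), hScard, ← hl]
        congr 1
        omega
      rw [show k - 2 - i + 1 = k - 2 - i + 1 from rfl] at hd
      rw [hd1, hd2] at hd
      omega
    set T : Finset ℕ :=
      (Finset.Icc 1 (k - 1)).filter (fun t => l.getD (k - t) 0 = l.getD (k - t - 1) 0 + 2)
      with hTdef
    have hTsub : T ⊆ Finset.Icc 1 (k - 1) := Finset.filter_subset _ _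
    have key : ∀ i, i < k → Dk.a k T i = l.getD i 0 := by
      intro i
      induction i with
      | zero => intro _; rw [Dk.a_zero k hk hTsub, hzero]
      | succ i ih =>
        intro hik
        have hi : i < k := by omega
        have e := Dk.c_succ k T hi
        have hmem : (k - (i + 1) ∈ T) ↔ l.getD (i + 1) 0 = l.getD i 0 + 2 := by
          rw [hTdef]
          simp only [Finset.mem_filter, Finset.mem_Icc]
          have h1 : k - (k - (i + 1)) = i + 1 := by omega
          have h2 : k - (k - (i + 1)) - 1 = i := by omega
          rw [h2, h1]
          constructor
          · rintro ⟨_, h⟩; exact h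
          · intro h; exact ⟨⟨by omega, by omega⟩, h⟩
        have hs := hstep i hik
        have hihi := ih hi
        simp only [Dk.a] at hihi ⊢
        by_cases hcase : l.getD (i + 1) 0 = l.getD i 0 + 2
        · rw [if_pos (hmem.mpr hcase)] at e; omega
        · rw [if_neg (fun hm => hcase (hmem.mp hm))] at e; omega
    have hgS : Dk.g k T = S := by
      ext x
      simp only [Dk.g, Finset.mem_image, Finset.mem_range]
      constructor
      · rintro ⟨i, hi, rfl⟩
        rw [key i hi]
        exact hmeml i hi
      · intro hx
        have hxl : x ∈ l := (Finset.mem_sort _).mpr hx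
        obtain ⟨i, hi, hx'⟩ := List.mem_iff_getElem.mp hxl
        exact ⟨i, by omega, by
          rw [key i (by omega), List.getD_eq_getElem _ _ hi]; exact hx'⟩
    refine ⟨T, ?_, hgS⟩
    simp only [Finset.mem_filter, Finset.mem_powerset]
    refine ⟨hTsub, ?_⟩
    have hsumA := Dk.sum_a k hk hTsub
    have hinj : ∀ x ∈ Finset.range k, ∀ y ∈ Finset.range k,
        Dk.a k T x = Dk.a k T y → x = y := fun x _ y _ h =>
      (Dk.a_strictMono k T).injective h
    have h5 : (Dk.g k T).sum id = ∑ i ∈ Finset.range k, Dk.a k T i := by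
      rw [Dk.g, Finset.sum_image hinj]
      rfl
    rw [hgS, hSsum] at h5
    omega
end

section
/- For every positive integer n and nonnegative integer k, the number of partitions of n into distinct parts with smallest part odd, exactly k odd parts, and an even number of parts equals the number of such partitions with exactly k odd parts and an odd number of parts, unless n = k^2, in which case they differ by exactly 1 (the difference being (-1)^k when signed by parity of the number of parts). -/
open Finset

def Pairs (j t m : ℕ) : Finset (Finset ℕ × Finset ℕ) :=
  ((Finset.range (m+1)).powerset ×ˢ (Finset.range (m+1)).powerset).filter
    (fun p => p.1.card = j ∧ (∀ x ∈ p.1, Odd x) ∧ (∀ x ∈ p.2, t < x) ∧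
      p.1.sum id + 2 * p.2.sum id = m)

def Phi (j t m : ℕ) : ℤ := ∑ p ∈ Pairs j t m, (-1 : ℤ) ^ p.2.card

lemma mem_Pairs {j t m : ℕ} {p : Finset ℕ × Finset ℕ} :
    p ∈ Pairs j t m ↔ p.1.card = j ∧ (∀ x ∈ p.1, Odd x) ∧ (∀ x ∈ p.2, t < x) ∧
      p.1.sum id + 2 * p.2.sum id = m := by
  constructor
  · intro h
    exact (Finset.mem_filter.mp h).2
  · intro h
    refine Finset.mem_filter.mpr ⟨?_, h⟩
    obtain ⟨hc, ho, hg, hs⟩ := h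
    rw [Finset.mem_product]
    constructor <;> rw [Finset.mem_powerset] <;> intro x hx <;> rw [Finset.mem_range]
    · have : x ≤ p.1.sum id := Finset.single_le_sum (fun i _ => Nat.zero_le i) hx
      omega
    · have : x ≤ p.2.sum id := Finset.single_le_sum (fun i _ => Nat.zero_le i) hx
      omega

lemma phi_peel_gamma (j t m : ℕ) :
    Phi j t m = Phi j (t+1) m -
      (if 2*(t+1) ≤ m then Phi j (t+1) (m - 2*(t+1)) else 0) := by
  classical
  have hsplit := Finset.sum_filter_add_sum_filter_not (Pairs j t m)
    (fun p => (t+1) ∈ p.2) (fun p => (-1 : ℤ) ^ p.2.card)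
  have hnot : (Pairs j t m).filter (fun p => ¬ (t+1) ∈ p.2) = Pairs j (t+1) m := by
    ext p
    simp only [Finset.mem_filter, mem_Pairs]
    constructor
    · rintro ⟨⟨hc, ho, hg, hs⟩, hni⟩
      refine ⟨hc, ho, fun x hx => ?_, hs⟩
      have := hg x hx
      have : x ≠ t+1 := by rintro rfl; exact hni hx
      omega
    · rintro ⟨hc, ho, hg, hs⟩
      refine ⟨⟨hc, ho, fun x hx => by have := hg x hx; omega, hs⟩, fun hx => by
        have := hg _ hx; omega⟩
  have hin : ∑ p ∈ (Pairs j t m).filter (fun p => (t+1) ∈ p.2), (-1 : ℤ) ^ p.2.card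
      = -(if 2*(t+1) ≤ m then Phi j (t+1) (m - 2*(t+1)) else 0) := by
    by_cases h : 2*(t+1) ≤ m
    · rw [if_pos h]
      rw [show -Phi j (t+1) (m - 2*(t+1)) =
        ∑ q ∈ Pairs j (t+1) (m - 2*(t+1)), -((-1 : ℤ) ^ q.2.card) by
          rw [Phi, ← Finset.sum_neg_distrib]]
      refine Finset.sum_nbij' (i := fun p => (p.1, p.2.erase (t+1)))
        (j := fun q => (q.1, insert (t+1) q.2)) ?_ ?_ ?_ ?_ ?_
      · intro p hp
        obtain ⟨hmem, hi⟩ := Finset.mem_filter.mp hp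
        obtain ⟨hc, ho, hg, hs⟩ := mem_Pairs.mp hmem
        have hsum : (p.2.erase (t+1)).sum id + (t+1) = p.2.sum id :=
          Finset.sum_erase_add _ _ hi
        refine mem_Pairs.mpr ⟨hc, ho, fun x hx => ?_, ?_⟩
        · obtain ⟨hne, hx2⟩ := Finset.mem_erase.mp hx
          have := hg x hx2; omega
        · simp only at hsum ⊢
          omega
      · intro q hq
        obtain ⟨hc, ho, hg, hs⟩ := mem_Pairs.mp hq
        have hni : (t+1) ∉ q.2 := fun hx => by have := hg _ hx; omega
        refine Finset.mem_filter.mpr ⟨mem_Pairs.mpr ⟨hc, ho, fun x hx => ?_, ?_⟩, ?_⟩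
        · rcases Finset.mem_insert.mp hx with rfl | hx
          · omega
          · have := hg x hx; omega
        · rw [Finset.sum_insert hni]
          simp only [id] at hs ⊢
          omega
        · exact Finset.mem_insert_self _ _
      · intro p hp
        obtain ⟨hmem, hi⟩ := Finset.mem_filter.mp hp
        simp [Finset.insert_erase hi]
      · intro q hq
        obtain ⟨hc, ho, hg, hs⟩ := mem_Pairs.mp hq
        have hni : (t+1) ∉ q.2 := fun hx => by have := hg _ hx; omega
        simp [Finset.erase_insert hni]
      · intro p hp
        obtain ⟨hmem, hi⟩ := Finset.mem_filter.mp hp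
        have : p.2.card = (p.2.erase (t+1)).card + 1 := by
          rw [Finset.card_erase_of_mem hi]
          have : 0 < p.2.card := Finset.card_pos.mpr ⟨_, hi⟩
          omega
        rw [this, pow_succ]
        ring
    · rw [if_neg h, neg_zero]
      apply Finset.sum_eq_zero
      intro p hp
      obtain ⟨hmem, hi⟩ := Finset.mem_filter.mp hp
      obtain ⟨hc, ho, hg, hs⟩ := mem_Pairs.mp hmem
      exfalso
      have : (t+1) ≤ p.2.sum id := Finset.single_le_sum (fun i _ => Nat.zero_le i) hi
      omega
  simp only [Phi] at hin ⊢
  rw [← hsplit, hnot, hin]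
  ring
lemma shift_card (O : Finset ℕ) (h3 : ∀ x ∈ O, 3 ≤ x) :
    (O.image (fun x => x - 2)).card = O.card :=
  Finset.card_image_of_injOn (fun x hx y hy h => by
    have := h3 x hx; have := h3 y hy; omega)

lemma shift_sum (O : Finset ℕ) (h3 : ∀ x ∈ O, 3 ≤ x) :
    (O.image (fun x => x - 2)).sum id + 2 * O.card = O.sum id := by
  rw [Finset.sum_image (fun x hx y hy h => by
    have := h3 x hx; have := h3 y hy; omega)]
  have h1 : ∑ x ∈ O, ((x - 2) + 2) = ∑ x ∈ O, x :=
    Finset.sum_congr rfl (fun x hx => by have := h3 x hx; omega)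
  have h2 : ∑ x ∈ O, ((x - 2) + 2) = (∑ x ∈ O, (x - 2)) + O.card * 2 := by
    rw [Finset.sum_add_distrib, Finset.sum_const, smul_eq_mul]
  simp only [id]
  omega

lemma shift_up_down (O : Finset ℕ) (h3 : ∀ x ∈ O, 3 ≤ x) :
    (O.image (fun x => x - 2)).image (fun x => x + 2) = O := by
  ext y
  simp only [Finset.mem_image]
  constructor
  · rintro ⟨x, ⟨z, hz, rfl⟩, rfl⟩
    have := h3 z hz
    have : z - 2 + 2 = z := by omega
    rw [this]; exact hz
  · intro hy
    exact ⟨y - 2, ⟨y, hy, rfl⟩, by have := h3 y hy; omega⟩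

lemma shift_down_up (Q : Finset ℕ) :
    (Q.image (fun x => x + 2)).image (fun x => x - 2) = Q := by
  rw [Finset.image_image]
  have : ((fun x => x - 2) ∘ (fun x => x + 2)) = id := by
    funext x; simp
  rw [this, Finset.image_id]

lemma up_card (Q : Finset ℕ) : (Q.image (fun x => x + 2)).card = Q.card :=
  Finset.card_image_of_injOn (fun x _ y _ h => by omega)

lemma up_sum (Q : Finset ℕ) :
    (Q.image (fun x => x + 2)).sum id = Q.sum id + 2 * Q.card := by
  rw [Finset.sum_image (fun x _ y _ h => by omega)]
  simp only [id]
  rw [Finset.sum_add_distrib, Finset.sum_const, smul_eq_mul]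
  ring

lemma odd_ge_three {x : ℕ} (h : Odd x) (h1 : x ≠ 1) : 3 ≤ x := by
  obtain ⟨c, rfl⟩ := h; omega

lemma phi_peel_O (j t m : ℕ) :
    Phi (j+1) t m = (if 2*(j+1) ≤ m then Phi (j+1) t (m - 2*(j+1)) else 0)
                  + (if 2*j+1 ≤ m then Phi j t (m - (2*j+1)) else 0) := by
  classical
  have hsplit := Finset.sum_filter_add_sum_filter_not (Pairs (j+1) t m)
    (fun p => (1:ℕ) ∈ p.1) (fun p => (-1 : ℤ) ^ p.2.card)
  -- branch without 1 : shift all of O down by 2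
  have hnot : ∑ p ∈ (Pairs (j+1) t m).filter (fun p => (1:ℕ) ∉ p.1), (-1 : ℤ) ^ p.2.card
      = (if 2*(j+1) ≤ m then Phi (j+1) t (m - 2*(j+1)) else 0) := by
    by_cases h : 2*(j+1) ≤ m
    · rw [if_pos h, Phi]
      refine Finset.sum_nbij' (i := fun p => (p.1.image (fun x => x - 2), p.2))
        (j := fun q => (q.1.image (fun x => x + 2), q.2)) ?_ ?_ ?_ ?_ ?_
      · intro p hp
        obtain ⟨hmem, hni⟩ := Finset.mem_filter.mp hp
        obtain ⟨hc, ho, hg, hs⟩ := mem_Pairs.mp hmem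
        have h3 : ∀ x ∈ p.1, 3 ≤ x := fun x hx =>
          odd_ge_three (ho x hx) (fun h1 => hni (h1 ▸ hx))
        refine mem_Pairs.mpr ⟨by rw [shift_card _ h3, hc], ?_, hg, ?_⟩
        · intro x hx
          obtain ⟨z, hz, rfl⟩ := Finset.mem_image.mp hx
          obtain ⟨c, rfl⟩ := ho z hz
          have := h3 _ hz
          exact ⟨c - 1, by omega⟩
        · have h2 := shift_sum p.1 h3
          have h4 := shift_card p.1 h3
          dsimp only
          omega
      · intro q hq
        obtain ⟨hc, ho, hg, hs⟩ := mem_Pairs.mp hq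
        refine Finset.mem_filter.mpr ⟨mem_Pairs.mpr ⟨by rw [up_card, hc], ?_, hg, ?_⟩, ?_⟩
        · intro x hx
          obtain ⟨z, hz, rfl⟩ := Finset.mem_image.mp hx
          obtain ⟨c, rfl⟩ := ho z hz
          exact ⟨c + 1, by omega⟩
        · dsimp only
          rw [up_sum, hc]
          omega
        · intro hx
          obtain ⟨z, hz, hzz⟩ := Finset.mem_image.mp hx
          omega
      · intro p hp
        obtain ⟨hmem, hni⟩ := Finset.mem_filter.mp hp
        obtain ⟨hc, ho, hg, hs⟩ := mem_Pairs.mp hmem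
        have h3 : ∀ x ∈ p.1, 3 ≤ x := fun x hx =>
          odd_ge_three (ho x hx) (fun h1 => hni (h1 ▸ hx))
        exact Prod.ext (shift_up_down _ h3) rfl
      · intro q hq
        exact Prod.ext (shift_down_up _) rfl
      · intro p hp
        rfl
    · rw [if_neg h]
      apply Finset.sum_eq_zero
      intro p hp
      obtain ⟨hmem, hni⟩ := Finset.mem_filter.mp hp
      obtain ⟨hc, ho, hg, hs⟩ := mem_Pairs.mp hmem
      exfalso
      have h3 : ∀ x ∈ p.1, 3 ≤ x := fun x hx =>
        odd_ge_three (ho x hx) (fun h1 => hni (h1 ▸ hx))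
      have := Finset.card_nsmul_le_sum p.1 id 3 (fun x hx => h3 x hx)
      rw [hc, smul_eq_mul] at this
      omega
  -- branch with 1 : remove 1, shift rest down by 2
  have hin : ∑ p ∈ (Pairs (j+1) t m).filter (fun p => (1:ℕ) ∈ p.1), (-1 : ℤ) ^ p.2.card
      = (if 2*j+1 ≤ m then Phi j t (m - (2*j+1)) else 0) := by
    by_cases h : 2*j+1 ≤ m
    · rw [if_pos h, Phi]
      refine Finset.sum_nbij' (i := fun p => ((p.1.erase 1).image (fun x => x - 2), p.2))
        (j := fun q => (insert 1 (q.1.image (fun x => x + 2)), q.2)) ?_ ?_ ?_ ?_ ?_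
      · intro p hp
        obtain ⟨hmem, hi⟩ := Finset.mem_filter.mp hp
        obtain ⟨hc, ho, hg, hs⟩ := mem_Pairs.mp hmem
        have h3 : ∀ x ∈ p.1.erase 1, 3 ≤ x := fun x hx => by
          obtain ⟨hne, hx1⟩ := Finset.mem_erase.mp hx
          exact odd_ge_three (ho x hx1) hne
        have hce : (p.1.erase 1).card = j := by
          rw [Finset.card_erase_of_mem hi, hc]
          omega
        have hse : (p.1.erase 1).sum id + 1 = p.1.sum id :=
          Finset.sum_erase_add _ _ hi
        refine mem_Pairs.mpr ⟨by rw [shift_card _ h3, hce], ?_, hg, ?_⟩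
        · intro x hx
          obtain ⟨z, hz, rfl⟩ := Finset.mem_image.mp hx
          obtain ⟨c, rfl⟩ := ho z (Finset.mem_erase.mp hz).2
          have := h3 _ hz
          exact ⟨c - 1, by omega⟩
        · have h2 := shift_sum _ h3
          have h4 := shift_card _ h3
          dsimp only
          omega
      · intro q hq
        obtain ⟨hc, ho, hg, hs⟩ := mem_Pairs.mp hq
        have hni : (1:ℕ) ∉ q.1.image (fun x => x + 2) := by
          intro hx
          obtain ⟨z, hz, hzz⟩ := Finset.mem_image.mp hx
          omega
        refine Finset.mem_filter.mpr ⟨mem_Pairs.mpr ⟨?_, ?_, hg, ?_⟩, Finset.mem_insert_self _ _⟩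
        · rw [Finset.card_insert_of_notMem hni, up_card, hc]
        · intro x hx
          rcases Finset.mem_insert.mp hx with rfl | hx
          · exact ⟨0, rfl⟩
          · obtain ⟨z, hz, rfl⟩ := Finset.mem_image.mp hx
            obtain ⟨c, rfl⟩ := ho z hz
            exact ⟨c + 1, by omega⟩
        · dsimp only
          rw [Finset.sum_insert hni, up_sum, hc]
          simp only [id] at *
          omega
      · intro p hp
        obtain ⟨hmem, hi⟩ := Finset.mem_filter.mp hp
        obtain ⟨hc, ho, hg, hs⟩ := mem_Pairs.mp hmem
        have h3 : ∀ x ∈ p.1.erase 1, 3 ≤ x := fun x hx => by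
          obtain ⟨hne, hx1⟩ := Finset.mem_erase.mp hx
          exact odd_ge_three (ho x hx1) hne
        refine Prod.ext ?_ rfl
        simp only
        rw [shift_up_down _ h3, Finset.insert_erase hi]
      · intro q hq
        obtain ⟨hc, ho, hg, hs⟩ := mem_Pairs.mp hq
        have hni : (1:ℕ) ∉ q.1.image (fun x => x + 2) := by
          intro hx
          obtain ⟨z, hz, hzz⟩ := Finset.mem_image.mp hx
          omega
        refine Prod.ext ?_ rfl
        simp only
        rw [Finset.erase_insert hni, shift_down_up]
      · intro p hp
        rfl
    · rw [if_neg h]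
      apply Finset.sum_eq_zero
      intro p hp
      obtain ⟨hmem, hi⟩ := Finset.mem_filter.mp hp
      obtain ⟨hc, ho, hg, hs⟩ := mem_Pairs.mp hmem
      exfalso
      have h3 : ∀ x ∈ p.1.erase 1, 3 ≤ x := fun x hx => by
        obtain ⟨hne, hx1⟩ := Finset.mem_erase.mp hx
        exact odd_ge_three (ho x hx1) hne
      have hce : (p.1.erase 1).card = j := by
        rw [Finset.card_erase_of_mem hi, hc]
        omega
      have hse : (p.1.erase 1).sum id + 1 = p.1.sum id :=
        Finset.sum_erase_add _ _ hi
      have := Finset.card_nsmul_le_sum (p.1.erase 1) id 3 (fun x hx => h3 x hx)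
      rw [hce, smul_eq_mul] at this
      simp only [id] at *
      omega
  rw [Phi, ← hsplit, hnot, hin, add_comm]
lemma phi_zero_boundary (t m : ℕ) (h : m ≤ 2*t+1) : Phi 0 t m = if m = 0 then 1 else 0 := by
  rcases Nat.eq_zero_or_pos m with rfl | hm
  · rw [if_pos rfl, Phi]
    have : Pairs 0 t 0 = {((∅ : Finset ℕ), (∅ : Finset ℕ))} := by
      ext p
      rw [mem_Pairs, Finset.mem_singleton]
      constructor
      · rintro ⟨hc, ho, hg, hs⟩
        have h1 : p.1 = ∅ := Finset.card_eq_zero.mp hc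
        have h2 : p.2 = ∅ := by
          by_contra hne
          obtain ⟨x, hx⟩ := Finset.nonempty_iff_ne_empty.mpr hne
          have hxs : x ≤ p.2.sum id := Finset.single_le_sum (fun i _ => Nat.zero_le i) hx
          have := hg x hx
          omega
        rw [Prod.ext_iff]
        exact ⟨h1, h2⟩
      · rintro rfl
        refine ⟨rfl, by simp, by simp, by simp⟩
    rw [this, Finset.sum_singleton]
    simp
  · rw [if_neg (by omega), Phi]
    have : Pairs 0 t m = ∅ := by
      apply Finset.eq_empty_of_forall_notMem
      intro p hp
      obtain ⟨hc, ho, hg, hs⟩ := mem_Pairs.mp hp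
      have h1 : p.1 = ∅ := Finset.card_eq_zero.mp hc
      rw [h1] at hs
      simp at hs
      have h2 : p.2.Nonempty := by
        rw [Finset.nonempty_iff_ne_empty]
        intro he
        rw [he] at hs
        simp at hs
        omega
      obtain ⟨x, hx⟩ := h2
      have hxs : x ≤ p.2.sum id := Finset.single_le_sum (fun i _ => Nat.zero_le i) hx
      have hid : p.2.sum id = ∑ x ∈ p.2, x := rfl
      have := hg x hx
      omega
    rw [this, Finset.sum_empty]
noncomputable def Psi (r j m : ℕ) : ℤ :=
  ∑ b ∈ Finset.range (m+1), if 2*r*b ≤ m then Phi j b (m - 2*r*b) else 0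

lemma psi_pad (r j m N : ℕ) (hr : 1 ≤ r) (hN : m + 1 ≤ N) :
    ∑ b ∈ Finset.range N, (if 2*r*b ≤ m then Phi j b (m - 2*r*b) else 0) = Psi r j m := by
  rw [Psi]
  refine (Finset.sum_subset (Finset.range_subset_range.mpr hN) ?_).symm
  intro b _ hb
  rw [Finset.mem_range] at hb
  rw [if_neg]
  push_neg
  nlinarith

lemma psi_succ (s j m : ℕ) (hs : 1 ≤ s) :
    Psi (s+1) j m = Psi s j m - (if 2*s ≤ m then Psi s j (m - 2*s) else 0) := by
  have key : ∀ b : ℕ,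
      (if 2*s*(b+1) ≤ m then Phi j (b+1) (m - 2*s*(b+1)) else 0)
      = (if 2*s*(b+1) ≤ m then Phi j b (m - 2*s*(b+1)) else 0)
      + (if 2*(s+1)*(b+1) ≤ m then Phi j (b+1) (m - 2*(s+1)*(b+1)) else 0) := by
    intro b
    by_cases h1 : 2*s*(b+1) ≤ m
    · rw [if_pos h1, if_pos h1]
      have := phi_peel_gamma j b (m - 2*s*(b+1))
      have harg : 2*(b+1) ≤ m - 2*s*(b+1) ↔ 2*(s+1)*(b+1) ≤ m := by
        constructor <;> intro <;> nlinarith [Nat.sub_add_cancel h1]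
      by_cases h2 : 2*(s+1)*(b+1) ≤ m
      · rw [if_pos h2]
        rw [if_pos (harg.mpr h2)] at this
        have hX : 2*(s+1)*(b+1) = 2*s*(b+1) + 2*(b+1) := by ring
        have harg2 : m - 2*s*(b+1) - 2*(b+1) = m - 2*(s+1)*(b+1) := by omega
        rw [harg2] at this
        linarith
      · rw [if_neg h2]
        rw [if_neg (fun hc => h2 (harg.mp hc))] at this
        linarith
    · rw [if_neg h1, if_neg h1, if_neg (fun hc : 2*(s+1)*(b+1) ≤ m => h1 (by nlinarith))]
      ring
  have e1 : Psi s j m = (∑ b ∈ Finset.range m,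
      (if 2*s*(b+1) ≤ m then Phi j (b+1) (m - 2*s*(b+1)) else 0)) + Phi j 0 m := by
    rw [Psi, Finset.sum_range_succ']
    congr 1
  have e2 : Psi (s+1) j m = (∑ b ∈ Finset.range m,
      (if 2*(s+1)*(b+1) ≤ m then Phi j (b+1) (m - 2*(s+1)*(b+1)) else 0)) + Phi j 0 m := by
    rw [Psi, Finset.sum_range_succ']
    congr 1
  have e3 : (∑ b ∈ Finset.range m, (if 2*s*(b+1) ≤ m then Phi j b (m - 2*s*(b+1)) else 0))
      = (if 2*s ≤ m then Psi s j (m - 2*s) else 0) := by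
    by_cases h : 2*s ≤ m
    · rw [if_pos h]
      rw [← psi_pad s j (m - 2*s) m hs (by omega)]
      apply Finset.sum_congr rfl
      intro b _
      have hY : 2*s*(b+1) = 2*s*b + 2*s := by ring
      have hg : 2*s*(b+1) ≤ m ↔ 2*s*b ≤ m - 2*s := by
        constructor <;> intro <;> omega
      by_cases h1 : 2*s*(b+1) ≤ m
      · rw [if_pos h1, if_pos (hg.mp h1)]
        congr 1
        omega
      · rw [if_neg h1, if_neg (fun hc => h1 (hg.mpr hc))]
    · rw [if_neg h]
      apply Finset.sum_eq_zero
      intro b _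
      rw [if_neg]
      intro hc
      apply h
      nlinarith
  have e4 : (∑ b ∈ Finset.range m,
      (if 2*s*(b+1) ≤ m then Phi j (b+1) (m - 2*s*(b+1)) else 0))
      = (∑ b ∈ Finset.range m, (if 2*s*(b+1) ≤ m then Phi j b (m - 2*s*(b+1)) else 0))
      + (∑ b ∈ Finset.range m,
          (if 2*(s+1)*(b+1) ≤ m then Phi j (b+1) (m - 2*(s+1)*(b+1)) else 0)) := by
    rw [← Finset.sum_add_distrib]
    exact Finset.sum_congr rfl (fun b _ => key b)
  rw [e3] at e4
  linarith [e1, e2, e4]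

lemma psi_peel_O (r j m : ℕ) (hr : 1 ≤ r) :
    Psi r (j+1) m = (if 2*(j+1) ≤ m then Psi r (j+1) (m - 2*(j+1)) else 0)
                  + (if 2*j+1 ≤ m then Psi r j (m - (2*j+1)) else 0) := by
  have key : ∀ b : ℕ,
      (if 2*r*b ≤ m then Phi (j+1) b (m - 2*r*b) else 0)
      = (if 2*(j+1) + 2*r*b ≤ m then Phi (j+1) b (m - 2*(j+1) - 2*r*b) else 0)
      + (if 2*j+1 + 2*r*b ≤ m then Phi j b (m - (2*j+1) - 2*r*b) else 0) := by
    intro b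
    by_cases h1 : 2*r*b ≤ m
    · rw [if_pos h1, phi_peel_O j b (m - 2*r*b)]
      congr 1
      · by_cases h2 : 2*(j+1) + 2*r*b ≤ m
        · rw [if_pos (by omega : 2*(j+1) ≤ m - 2*r*b), if_pos h2]
          congr 1
          omega
        · rw [if_neg (by omega : ¬ 2*(j+1) ≤ m - 2*r*b), if_neg h2]
      · by_cases h2 : 2*j+1 + 2*r*b ≤ m
        · rw [if_pos (by omega : 2*j+1 ≤ m - 2*r*b), if_pos h2]
          congr 1
          omega
        · rw [if_neg (by omega : ¬ 2*j+1 ≤ m - 2*r*b), if_neg h2]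
    · rw [if_neg h1, if_neg (by omega), if_neg (by omega)]
      ring
  rw [Psi, Finset.sum_congr rfl (fun b _ => key b), Finset.sum_add_distrib]
  congr 1
  · by_cases h : 2*(j+1) ≤ m
    · rw [if_pos h, ← psi_pad r (j+1) (m - 2*(j+1)) (m+1) hr (by omega)]
      apply Finset.sum_congr rfl
      intro b _
      by_cases h1 : 2*(j+1) + 2*r*b ≤ m
      · rw [if_pos h1, if_pos (by omega)]
      · rw [if_neg h1, if_neg (by omega)]
    · rw [if_neg h]
      apply Finset.sum_eq_zero
      intro b _
      rw [if_neg (by omega)]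
  · by_cases h : 2*j+1 ≤ m
    · rw [if_pos h, ← psi_pad r j (m - (2*j+1)) (m+1) hr (by omega)]
      apply Finset.sum_congr rfl
      intro b _
      by_cases h1 : 2*j+1 + 2*r*b ≤ m
      · rw [if_pos h1, if_pos (by omega)]
      · rw [if_neg h1, if_neg (by omega)]
    · rw [if_neg h]
      apply Finset.sum_eq_zero
      intro b _
      rw [if_neg (by omega)]

lemma telesc (m : ℕ) : ∀ B, (∑ b ∈ Finset.range (B+1),
    if 2*1*b ≤ m then Phi 0 b (m - 2*1*b) else 0) = Phi 0 B m := by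
  intro B
  induction B with
  | zero => simp
  | succ B ih =>
      rw [Finset.sum_range_succ, ih]
      have := phi_peel_gamma 0 B m
      have hg : 2*1*(B+1) = 2*(B+1) := by ring
      rw [hg]
      have hg2 : m - 2*1*(B+1) = m - 2*(B+1) := by omega
      rw [hg2]
      linarith [this]

lemma psi_one_zero (m : ℕ) : Psi 1 0 m = if m = 0 then 1 else 0 := by
  rw [Psi, telesc m m, phi_zero_boundary m m (by omega)]

lemma psi_diag : ∀ j m, Psi (j+1) j m = if m = j^2 then 1 else 0 := by
  intro j
  induction j with
  | zero => intro m; rw [psi_one_zero]; norm_num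
  | succ j ih =>
      intro m
      have h1 := psi_succ (j+1) (j+1) m (by omega)
      have h2 := psi_peel_O (j+1) j m (by omega)
      have h3 : Psi (j+1+1) (j+1) m = (if 2*j+1 ≤ m then Psi (j+1) j (m - (2*j+1)) else 0) := by
        rw [h1, h2]
        ring
      rw [h3]
      by_cases h : 2*j+1 ≤ m
      · rw [if_pos h, ih]
        have : m - (2*j+1) = j^2 ↔ m = (j+1)^2 := by
          have e1 : j^2 = j*j := by ring
          have e2 : (j+1)^2 = j*j + 2*j + 1 := by ring
          omega
        by_cases h2 : m = (j+1)^2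
        · rw [if_pos h2, if_pos (this.mpr h2)]
        · rw [if_neg h2, if_neg (fun hc => h2 (this.mp hc))]
      · rw [if_neg h, if_neg]
        intro hc
        have : (j+1)^2 = j*j + 2*j+1 := by ring
        omega

section helpers
lemma gshift_card (A : Finset ℕ) (c : ℕ) (h : ∀ x ∈ A, c ≤ x) :
    (A.image (fun x => x - c)).card = A.card :=
  Finset.card_image_of_injOn (fun x hx y hy hxy => by
    have := h x hx; have := h y hy; omega)

lemma gshift_sum (A : Finset ℕ) (c : ℕ) (h : ∀ x ∈ A, c ≤ x) :
    (A.image (fun x => x - c)).sum id + c * A.card = A.sum id := by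
  rw [Finset.sum_image (fun x hx y hy hxy => by have := h x hx; have := h y hy; omega)]
  have h2 : ∑ x ∈ A, ((x - c) + c) = ∑ x ∈ A, id x :=
    Finset.sum_congr rfl (fun x hx => by have := h x hx; simp only [id]; omega)
  rw [Finset.sum_add_distrib, Finset.sum_const, smul_eq_mul, mul_comm] at h2
  simpa only [id] using h2

lemma gshift_updown (A : Finset ℕ) (c : ℕ) (h : ∀ x ∈ A, c ≤ x) :
    (A.image (fun x => x - c)).image (fun x => x + c) = A := by
  ext y
  simp only [Finset.mem_image]
  constructor
  · rintro ⟨x, ⟨z, hz, rfl⟩, rfl⟩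
    have := h z hz
    have he : z - c + c = z := by omega
    rw [he]; exact hz
  · intro hy
    exact ⟨y - c, ⟨y, hy, rfl⟩, by have := h y hy; omega⟩

lemma gdownup (A : Finset ℕ) (c : ℕ) :
    (A.image (fun x => x + c)).image (fun x => x - c) = A := by
  rw [Finset.image_image]
  have he : ((fun x => x - c) ∘ (fun x => x + c)) = id := by funext x; simp
  rw [he, Finset.image_id]

lemma gup_card (A : Finset ℕ) (c : ℕ) : (A.image (fun x => x + c)).card = A.card :=
  Finset.card_image_of_injOn (fun x _ y _ hxy => by omega)

lemma gup_sum (A : Finset ℕ) (c : ℕ) :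
    (A.image (fun x => x + c)).sum id = A.sum id + c * A.card := by
  rw [Finset.sum_image (fun x _ y _ hxy => by omega)]
  simp only [id]
  rw [Finset.sum_add_distrib, Finset.sum_const, smul_eq_mul, mul_comm]

lemma half_card (E : Finset ℕ) (h : ∀ x ∈ E, ¬ Odd x) :
    (E.image (fun x => x/2)).card = E.card :=
  Finset.card_image_of_injOn (fun x hx y hy hxy => by
    have hx2 := Nat.odd_iff.not.mp (h x hx)
    have hy2 := Nat.odd_iff.not.mp (h y hy)
    omega)

lemma half_sum (E : Finset ℕ) (h : ∀ x ∈ E, ¬ Odd x) :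
    2 * (E.image (fun x => x/2)).sum id = E.sum id := by
  rw [Finset.sum_image (fun x hx y hy hxy => by
    have hx2 := Nat.odd_iff.not.mp (h x hx)
    have hy2 := Nat.odd_iff.not.mp (h y hy)
    omega), Finset.mul_sum]
  apply Finset.sum_congr rfl
  intro x hx
  have hx2 := Nat.odd_iff.not.mp (h x hx)
  simp only [id]
  omega

lemma half_updown (E : Finset ℕ) (h : ∀ x ∈ E, ¬ Odd x) :
    (E.image (fun x => x/2)).image (fun x => 2*x) = E := by
  ext y
  simp only [Finset.mem_image]
  constructor
  · rintro ⟨x, ⟨z, hz, rfl⟩, rfl⟩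
    have hz2 := Nat.odd_iff.not.mp (h z hz)
    have he : 2 * (z / 2) = z := by omega
    rw [he]; exact hz
  · intro hy
    have hy2 := Nat.odd_iff.not.mp (h y hy)
    exact ⟨y / 2, ⟨y, hy, rfl⟩, by omega⟩

lemma double_downup (G : Finset ℕ) :
    (G.image (fun x => 2*x)).image (fun x => x/2) = G := by
  rw [Finset.image_image]
  have he : ((fun x => x/2) ∘ (fun x => 2*x)) = id := by
    funext x; simp [Nat.mul_div_cancel_left]
  rw [he, Finset.image_id]

lemma double_downup' (G : Finset ℕ) :
    (G.image (fun x => 2*x)).image (fun x => x/2) = G := double_downup G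

lemma double_sum (G : Finset ℕ) : (G.image (fun x => 2*x)).sum id = 2 * G.sum id := by
  rw [Finset.sum_image (fun x _ y _ hxy => by omega), Finset.mul_sum]
  rfl

lemma min_unbot {S : Finset ℕ} {mo : ℕ} (hmo : mo ∈ S) (hall : ∀ x ∈ S, mo ≤ x) :
    (WithTop.untopD 0 S.min) = mo := by
  have h1 : S.min ≤ (mo : WithTop ℕ) := Finset.min_le hmo
  have h2 : (mo : WithTop ℕ) ≤ S.min :=
    Finset.le_min (fun x hx => WithTop.coe_le_coe.mpr (hall x hx))
  rw [le_antisymm h1 h2]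
  rfl
end helpers


open scoped Classical in
/-- `Pdo n` : partitions of `n` into distinct parts with smallest part odd,
encoded as finsets of parts. -/
noncomputable def Pdo (n : ℕ) : Finset (Finset ℕ) :=
  (Finset.range (n + 1)).powerset.filter
    (fun S => S.sum id = n ∧ ∃ m ∈ S, Odd m ∧ ∀ x ∈ S, m ≤ x)

open scoped Classical in
lemma connection (n K : ℕ) (hkn : 2*K+1 ≤ n) :
    ∑ S ∈ (Pdo n).filter (fun S => (S.filter (fun x => Odd x)).card = K+1),
      (-1 : ℤ) ^ S.card
    = (-1:ℤ)^(K+1) * Psi (K+1) K (n - (2*K+1)) := by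
  set M := n - (2*K+1) with hMdef
  have hM : M + (2*K+1) = n := by omega
  have hRHS : (-1:ℤ)^(K+1) * Psi (K+1) K M
      = ∑ x ∈ (Finset.range (M+1)).sigma
          (fun b => if 2*(K+1)*b ≤ M then Pairs K b (M - 2*(K+1)*b) else ∅),
          (-1:ℤ)^(K+1) * (-1:ℤ)^(x.2.2.card) := by
    rw [Finset.sum_sigma, Psi, Finset.mul_sum]
    apply Finset.sum_congr rfl
    intro b _
    by_cases h : 2*(K+1)*b ≤ M
    · rw [if_pos h, if_pos h, Phi, Finset.mul_sum]
    · rw [if_neg h, if_neg h, Finset.sum_empty, mul_zero]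
  rw [hRHS]
  refine Finset.sum_nbij'
    (i := fun S => ⟨((WithTop.untopD 0 S.min) - 1)/2,
        (((S.filter (fun x => Odd x)).erase ((WithTop.untopD 0 S.min))).image
            (fun x => x - ((WithTop.untopD 0 S.min) + 1)),
         (S.filter (fun x => ¬ Odd x)).image (fun x => x/2))⟩)
    (j := fun q => insert (2*q.1+1)
        ((q.2.1.image (fun x => x + (2*q.1+2))) ∪ (q.2.2.image (fun x => 2*x))))
    ?_ ?_ ?_ ?_ ?_
  · -- forward membership
    intro S hS
    obtain ⟨hPdo, hcard⟩ := Finset.mem_filter.mp hS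
    obtain ⟨hpow, hsum, mo, hmoS, hmoOdd, hmoMin⟩ := Finset.mem_filter.mp hPdo
    have hmin : (WithTop.untopD 0 S.min) = mo := min_unbot hmoS hmoMin
    obtain ⟨b, hb⟩ : ∃ b, mo = 2*b+1 := by
      have := Nat.odd_iff.mp hmoOdd; exact ⟨mo/2, by omega⟩
    have hmoF : mo ∈ S.filter (fun x => Odd x) := Finset.mem_filter.mpr ⟨hmoS, hmoOdd⟩
    have hge : ∀ x ∈ (S.filter (fun x => Odd x)).erase mo, mo + 2 ≤ x := by
      intro x hx
      obtain ⟨hne, hxf⟩ := Finset.mem_erase.mp hx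
      obtain ⟨hxS, hxO⟩ := Finset.mem_filter.mp hxf
      have h1 := hmoMin x hxS
      have h2 := Nat.odd_iff.mp hxO
      have h3 := Nat.odd_iff.mp hmoOdd
      omega
    have hge1 : ∀ x ∈ (S.filter (fun x => Odd x)).erase mo, mo + 1 ≤ x :=
      fun x hx => by have := hge x hx; omega
    have hOc : ((S.filter (fun x => Odd x)).erase mo).card = K := by
      rw [Finset.card_erase_of_mem hmoF, hcard]
      omega
    have hOsum := gshift_sum _ (mo+1) hge1
    rw [hOc] at hOsum
    have hOcard : (((S.filter (fun x => Odd x)).erase mo).image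
        (fun x => x - (mo+1))).card = K := by
      rw [gshift_card _ (mo+1) hge1, hOc]
    have her : ((S.filter (fun x => Odd x)).erase mo).sum id + mo
        = (S.filter (fun x => Odd x)).sum id := Finset.sum_erase_add _ _ hmoF
    have hEsum := half_sum (S.filter (fun x => ¬ Odd x))
      (fun x hx => (Finset.mem_filter.mp hx).2)
    have hsplit := Finset.sum_filter_add_sum_filter_not S (fun x => Odd x) id
    have hbr : (mo+1)*K = 2*(b*K) + 2*K := by rw [hb]; ring
    have hbr2 : 2*(K+1)*b = 2*(b*K) + 2*b := by ring
    simp only [Function.id_def] at hOsum her hEsum hsplit hsum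
    have key1 : 2*(K+1)*b ≤ M := by omega
    have key2 : (((S.filter (fun x => Odd x)).erase mo).image
          (fun x => x - (mo+1))).sum id
        + 2 * ((S.filter (fun x => ¬ Odd x)).image (fun x => x/2)).sum id
        = M - 2*(K+1)*b := by
      simp only [Function.id_def]
      omega
    rw [Finset.mem_sigma]
    dsimp only
    rw [hmin]
    have hbb : (mo-1)/2 = b := by omega
    rw [hbb]
    constructor
    · rw [Finset.mem_range]; omega
    · rw [if_pos key1]
      refine mem_Pairs.mpr ⟨?_, ?_, ?_, ?_⟩
      · exact hOcard
      · intro x hx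
        obtain ⟨z, hz, rfl⟩ := Finset.mem_image.mp hx
        have h1 := hge z hz
        have h2 := Nat.odd_iff.mp (Finset.mem_filter.mp (Finset.mem_erase.mp hz).2).2
        have h3 := Nat.odd_iff.mp hmoOdd
        rw [Nat.odd_iff]
        omega
      · intro y hy
        obtain ⟨z, hz, rfl⟩ := Finset.mem_image.mp hy
        obtain ⟨hzS, hzE⟩ := Finset.mem_filter.mp hz
        have h1 := hmoMin z hzS
        have h2 := Nat.odd_iff.not.mp hzE
        omega
      · exact key2
  · -- backward membership
    rintro ⟨b, O, γ⟩ hq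
    obtain ⟨hbR, hpair⟩ := Finset.mem_sigma.mp hq
    by_cases hg : 2*(K+1)*b ≤ M
    swap
    · rw [if_neg hg] at hpair; exact absurd hpair (Finset.notMem_empty _)
    rw [if_pos hg] at hpair
    obtain ⟨hOc, hOodd, hγgt, hsum2⟩ := mem_Pairs.mp hpair
    dsimp only at hOc hOodd hγgt hsum2 ⊢
    have hA : ∀ x ∈ O.image (fun x => x + (2*b+2)), Odd x ∧ 2*b+3 ≤ x := by
      intro x hx
      obtain ⟨z, hz, rfl⟩ := Finset.mem_image.mp hx
      have h1 := Nat.odd_iff.mp (hOodd z hz)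
      constructor
      · rw [Nat.odd_iff]; omega
      · omega
    have hB : ∀ x ∈ γ.image (fun x => 2*x), ¬ Odd x ∧ 2*b+2 ≤ x := by
      intro x hx
      obtain ⟨z, hz, rfl⟩ := Finset.mem_image.mp hx
      have h1 := hγgt z hz
      constructor
      · rw [Nat.odd_iff]; omega
      · omega
    have hni : (2*b+1) ∉ O.image (fun x => x + (2*b+2)) ∪ γ.image (fun x => 2*x) := by
      intro hx
      rcases Finset.mem_union.mp hx with hx | hx
      · have := (hA _ hx).2; omega
      · have := (hB _ hx).2; omega
    have hdisj : Disjoint (O.image (fun x => x + (2*b+2))) (γ.image (fun x => 2*x)) := by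
      rw [Finset.disjoint_left]
      intro x hx1 hx2
      exact (hB x hx2).1 (hA x hx1).1
    have hAsum : (O.image (fun x => x + (2*b+2))).sum id = O.sum id + (2*b+2)*K := by
      rw [gup_sum, hOc]
    have hBsum : (γ.image (fun x => 2*x)).sum id = 2 * γ.sum id := double_sum γ
    have hUsum : (O.image (fun x => x + (2*b+2)) ∪ γ.image (fun x => 2*x)).sum id
        = O.sum id + (2*b+2)*K + 2 * γ.sum id := by
      rw [Finset.sum_union hdisj, hAsum, hBsum]
    have hbr : (2*b+2)*K = 2*(b*K) + 2*K := by ring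
    have hbr2 : 2*(K+1)*b = 2*(b*K) + 2*b := by ring
    have hjsum : (insert (2*b+1)
        (O.image (fun x => x + (2*b+2)) ∪ γ.image (fun x => 2*x))).sum id = n := by
      rw [Finset.sum_insert hni, hUsum]
      simp only [Function.id_def] at hsum2 ⊢
      omega
    have hminP : ∀ x ∈ insert (2*b+1)
        (O.image (fun x => x + (2*b+2)) ∪ γ.image (fun x => 2*x)), 2*b+1 ≤ x := by
      intro x hx
      rcases Finset.mem_insert.mp hx with rfl | hx
      · omega
      · rcases Finset.mem_union.mp hx with hx | hx
        · have := (hA _ hx).2; omega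
        · have := (hB _ hx).2; omega
    refine Finset.mem_filter.mpr ⟨Finset.mem_filter.mpr ⟨?_, hjsum, 2*b+1,
      Finset.mem_insert_self _ _, by rw [Nat.odd_iff]; omega, hminP⟩, ?_⟩
    · rw [Finset.mem_powerset]
      intro x hx
      rw [Finset.mem_range]
      have : x ≤ (insert (2*b+1)
          (O.image (fun x => x + (2*b+2)) ∪ γ.image (fun x => 2*x))).sum id :=
        Finset.single_le_sum (fun i _ => Nat.zero_le i) hx
      omega
    · have hfo : (insert (2*b+1)
          (O.image (fun x => x + (2*b+2)) ∪ γ.image (fun x => 2*x))).filter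
            (fun x => Odd x)
          = insert (2*b+1) (O.image (fun x => x + (2*b+2))) := by
        rw [Finset.filter_insert, if_pos (by rw [Nat.odd_iff]; omega : Odd (2*b+1)),
          Finset.filter_union,
          Finset.filter_true_of_mem (fun x hx => (hA x hx).1),
          Finset.filter_false_of_mem (fun x hx => (hB x hx).1),
          Finset.union_empty]
      rw [hfo, Finset.card_insert_of_notMem (fun hx => by have := (hA _ hx).2; omega),
        gup_card, hOc]
  · -- left inverse
    intro S hS
    obtain ⟨hPdo, hcard⟩ := Finset.mem_filter.mp hS
    obtain ⟨hpow, hsum, mo, hmoS, hmoOdd, hmoMin⟩ := Finset.mem_filter.mp hPdo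
    have hmin : (WithTop.untopD 0 S.min) = mo := min_unbot hmoS hmoMin
    obtain ⟨b, hb⟩ : ∃ b, mo = 2*b+1 := by
      have := Nat.odd_iff.mp hmoOdd; exact ⟨mo/2, by omega⟩
    have hmoF : mo ∈ S.filter (fun x => Odd x) := Finset.mem_filter.mpr ⟨hmoS, hmoOdd⟩
    have hge : ∀ x ∈ (S.filter (fun x => Odd x)).erase mo, mo + 1 ≤ x := by
      intro x hx
      obtain ⟨hne, hxf⟩ := Finset.mem_erase.mp hx
      obtain ⟨hxS, hxO⟩ := Finset.mem_filter.mp hxf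
      have h1 := hmoMin x hxS
      omega
    dsimp only
    rw [hmin]
    have hbb : 2*((mo-1)/2)+1 = mo := by omega
    have hbb2 : 2*((mo-1)/2)+2 = mo+1 := by omega
    rw [hbb, hbb2]
    rw [gshift_updown _ (mo+1) hge, half_updown _ (fun x hx => (Finset.mem_filter.mp hx).2)]
    rw [← Finset.insert_union, Finset.insert_erase hmoF]
    exact Finset.filter_union_filter_not_eq _ S
  · -- right inverse
    rintro ⟨b, O, γ⟩ hq
    obtain ⟨hbR, hpair⟩ := Finset.mem_sigma.mp hq
    by_cases hg : 2*(K+1)*b ≤ M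
    swap
    · rw [if_neg hg] at hpair; exact absurd hpair (Finset.notMem_empty _)
    rw [if_pos hg] at hpair
    obtain ⟨hOc, hOodd, hγgt, hsum2⟩ := mem_Pairs.mp hpair
    dsimp only at hOc hOodd hγgt hsum2 ⊢
    have hA : ∀ x ∈ O.image (fun x => x + (2*b+2)), Odd x ∧ 2*b+3 ≤ x := by
      intro x hx
      obtain ⟨z, hz, rfl⟩ := Finset.mem_image.mp hx
      have h1 := Nat.odd_iff.mp (hOodd z hz)
      exact ⟨by rw [Nat.odd_iff]; omega, by omega⟩
    have hB : ∀ x ∈ γ.image (fun x => 2*x), ¬ Odd x ∧ 2*b+2 ≤ x := by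
      intro x hx
      obtain ⟨z, hz, rfl⟩ := Finset.mem_image.mp hx
      have h1 := hγgt z hz
      exact ⟨by rw [Nat.odd_iff]; omega, by omega⟩
    have hminP : ∀ x ∈ insert (2*b+1)
        (O.image (fun x => x + (2*b+2)) ∪ γ.image (fun x => 2*x)), 2*b+1 ≤ x := by
      intro x hx
      rcases Finset.mem_insert.mp hx with rfl | hx
      · omega
      · rcases Finset.mem_union.mp hx with hx | hx
        · have := (hA _ hx).2; omega
        · have := (hB _ hx).2; omega
    have hminS : WithTop.untopD 0 (insert (2*b+1)
        (O.image (fun x => x + (2*b+2)) ∪ γ.image (fun x => 2*x))).min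
        = 2*b+1 := min_unbot (Finset.mem_insert_self _ _) hminP
    have hfo : (insert (2*b+1)
          (O.image (fun x => x + (2*b+2)) ∪ γ.image (fun x => 2*x))).filter
            (fun x => Odd x)
        = insert (2*b+1) (O.image (fun x => x + (2*b+2))) := by
      rw [Finset.filter_insert, if_pos (by rw [Nat.odd_iff]; omega : Odd (2*b+1)),
        Finset.filter_union,
        Finset.filter_true_of_mem (fun x hx => (hA x hx).1),
        Finset.filter_false_of_mem (fun x hx => (hB x hx).1),
        Finset.union_empty]
    have hfe : (insert (2*b+1)
          (O.image (fun x => x + (2*b+2)) ∪ γ.image (fun x => 2*x))).filter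
            (fun x => ¬ Odd x)
        = γ.image (fun x => 2*x) := by
      rw [Finset.filter_insert, if_neg (by
          rw [not_not, Nat.odd_iff]; omega),
        Finset.filter_union,
        Finset.filter_false_of_mem (fun x hx => not_not_intro (hA x hx).1),
        Finset.filter_true_of_mem (fun x hx => (hB x hx).1),
        Finset.empty_union]
    rw [hminS]
    have hbb : (2*b+1-1)/2 = b := by omega
    have hbb2 : 2*b+1+1 = 2*b+2 := by omega
    rw [hbb, hfo, hfe, hbb2]
    rw [Finset.erase_insert (fun hx => by have := (hA _ hx).2; omega)]
    rw [gdownup, double_downup]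
  · -- sign computation
    intro S hS
    obtain ⟨hPdo, hcard⟩ := Finset.mem_filter.mp hS
    dsimp only
    have hsplitc := Finset.card_filter_add_card_filter_not
      (s := S) (p := (fun x => Odd x))
    have hγc : ((S.filter (fun x => ¬ Odd x)).image (fun x => x/2)).card
        = (S.filter (fun x => ¬ Odd x)).card :=
      half_card _ (fun x hx => (Finset.mem_filter.mp hx).2)
    have hSc : S.card = (K+1)
        + ((S.filter (fun x => ¬ Odd x)).image (fun x => x/2)).card := by omega
    rw [hSc, pow_add]

open scoped Classical in
lemma lhs_empty (n K : ℕ) (h : n < 2*K+1) :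
    (Pdo n).filter (fun S => (S.filter (fun x => Odd x)).card = K+1) = ∅ := by
  apply Finset.eq_empty_of_forall_notMem
  intro S hS
  obtain ⟨hPdo, hcard⟩ := Finset.mem_filter.mp hS
  obtain ⟨hpow, hsum, mo, hmoS, hmoOdd, hmoMin⟩ := Finset.mem_filter.mp hPdo
  have hbig : ∃ x ∈ S.filter (fun x => Odd x), 2*K+1 ≤ x := by
    by_contra hb
    push_neg at hb
    have hinj : Set.InjOn (fun x => x/2) (S.filter (fun x => Odd x)) := by
      intro x hx y hy hxy
      simp only [Finset.coe_filter, Set.mem_setOf_eq] at hx hy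
      have h1 := Nat.odd_iff.mp hx.2
      have h2 := Nat.odd_iff.mp hy.2
      simp only at hxy
      omega
    have hmaps : ∀ x ∈ S.filter (fun x => Odd x), (fun x => x/2) x ∈ Finset.range K := by
      intro x hx
      have h1 := hb x hx
      have h2 := Nat.odd_iff.mp (Finset.mem_filter.mp hx).2
      rw [Finset.mem_range]
      dsimp only
      omega
    have := Finset.card_le_card_of_injOn _ hmaps hinj
    rw [hcard, Finset.card_range] at this
    omega
  obtain ⟨x, hxf, hx⟩ := hbig
  have hxS := (Finset.mem_filter.mp hxf).1
  have : x ≤ S.sum id := Finset.single_le_sum (fun i _ => Nat.zero_le i) hxS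
  omega

open scoped Classical in
lemma lhs_zero (n : ℕ) (hn : 1 ≤ n) :
    (Pdo n).filter (fun S => (S.filter (fun x => Odd x)).card = 0) = ∅ := by
  apply Finset.eq_empty_of_forall_notMem
  intro S hS
  obtain ⟨hPdo, hcard⟩ := Finset.mem_filter.mp hS
  obtain ⟨hpow, hsum, mo, hmoS, hmoOdd, hmoMin⟩ := Finset.mem_filter.mp hPdo
  have : mo ∈ S.filter (fun x => Odd x) := Finset.mem_filter.mpr ⟨hmoS, hmoOdd⟩
  have := Finset.card_pos.mpr ⟨mo, this⟩
  omega


open scoped Classical in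
/-- Refined sign balance: among partitions of `n` into distinct parts with smallest part
odd and exactly `k` odd parts, the signed count by parity of the number of parts is
`(-1)^k` if `n = k²` and `0` otherwise. -/
theorem refined_sign_balance (n k : ℕ) (hn : 1 ≤ n) :
    ∑ S ∈ (Pdo n).filter (fun S => (S.filter (fun x => Odd x)).card = k),
      (-1 : ℤ) ^ S.card =
    if n = k ^ 2 then (-1 : ℤ) ^ k else 0 := by
  rcases k with _ | K
  · have h0 : ¬ (n = 0^2) := by norm_num; omega
    rw [lhs_zero n hn, Finset.sum_empty, if_neg h0]
  · by_cases hc : 2*K+1 ≤ n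
    · rw [connection n K hc, psi_diag K (n - (2*K+1))]
      have hiff : n - (2*K+1) = K^2 ↔ n = (K+1)^2 := by
        have e1 : (K+1)^2 = K*K + 2*K + 1 := by ring
        have e2 : K^2 = K*K := by ring
        omega
      by_cases h2 : n = (K+1)^2
      · rw [if_pos (hiff.mpr h2), if_pos h2, mul_one]
      · rw [if_neg (fun hh => h2 (hiff.mp hh)), if_neg h2, mul_zero]
    · rw [lhs_empty n K (by omega), Finset.sum_empty, if_neg]
      intro hh
      have e1 : (K+1)^2 = K*K + 2*K + 1 := by ring
      omega
end

section
/- As formal power series in q and a: ∑_{k≥0} (-a)^k q^{k(k+1)/2} (-q;q)_{k-1} / (aq^2;q^2)_k (with the k=0 term equal to 1) equals ∑_{n≥0} q^{2n} (q^{2n+2};q^2)_∞ (aq^{2n+1};q^2)_∞; i.e., the two expansions of the partial theta function ∑_{k≥0}(-a)^k q^{k^2} agree. -/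
set_option maxHeartbeats 2000000

noncomputable section PartialTheta
open PowerSeries Finset

abbrev Rr : Type := PowerSeries (Polynomial ℤ)

def aa : Rr := PowerSeries.C (R := Polynomial ℤ) Polynomial.X

/-- triangular number as a sum -/
def tri (k : ℕ) : ℕ := ∑ i ∈ Finset.range (k+1), i

lemma tri_succ (k : ℕ) : tri (k+1) = tri k + (k+1) := Finset.sum_range_succ _ _

lemma tri_eq (k : ℕ) : tri k = k*(k+1)/2 := by
  have h := Finset.sum_range_id_mul_two (k+1)
  unfold tri
  have h2 : (k+1) * ((k+1) - 1) = k*(k+1) := by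
    simp [Nat.add_sub_cancel]; ring
  omega

lemma tri_ge (k : ℕ) : k+1 ≤ tri (k+1) := by
  rw [tri_succ]; omega

def mq (k : ℕ) : Rr := ∏ j ∈ Finset.range k, (1 + X^(j+1))

def Df (s j : ℕ) : Rr := 1 - aa * X^(2*(j+s)+2)

def Dd (s k : ℕ) : Rr := ∏ j ∈ Finset.range k, Df s j

def Aa (s k : ℕ) : Rr := mq (k-1) * (-aa)^k * X^(tri k + 2*s*k)

def Ll (s M : ℕ) : Rr := 1 + ∑ k ∈ Finset.Icc 1 M, Aa s k * Ring.inverse (Dd s k)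

def th (s T : ℕ) : Rr := ∑ k ∈ Finset.range (T+1), (-aa)^k * X^(k*k + 2*s*k)

lemma isUnit_Df (s j : ℕ) : IsUnit (Df s j) := by
  rw [PowerSeries.isUnit_iff_constantCoeff]
  simp [Df, aa]

lemma isUnit_Dd (s k : ℕ) : IsUnit (Dd s k) := by
  rw [PowerSeries.isUnit_iff_constantCoeff]
  rw [Dd, map_prod]
  have : ∀ j ∈ Finset.range k, (PowerSeries.constantCoeff (R := Polynomial ℤ)) (Df s j) = 1 := by
    intro j _; simp [Df, aa]
  rw [Finset.prod_congr rfl this, Finset.prod_const_one]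
  exact isUnit_one

end PartialTheta

section PartialTheta2
open PowerSeries Finset

lemma mq_succ (m : ℕ) : mq (m+1) = mq m * (1 + X^(m+1)) := Finset.prod_range_succ _ _

lemma bracket2 (s m : ℕ) :
    Aa s (m+2) + aa*X^(2*s+1) * (Aa (s+1) (m+1) * Df s 0)
      + (-aa)^(m+3) * X^(tri (m+3) + 2*s*(m+3)) * mq (m+2-1)
      - (-aa)^(m+2) * X^(tri (m+2) + 2*s*(m+2)) * mq (m+1-1) * Df s (m+1) = 0 := by
  simp only [Nat.add_sub_cancel]
  unfold Aa Df
  have e1 : m+2-1 = m+1 := rfl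
  have e2 : m+1-1 = m := rfl
  rw [e1, e2, mq_succ,
      show tri (m+3) = tri (m+1) + (m+2) + (m+3) by rw [tri_succ, tri_succ],
      show tri (m+2) = tri (m+1) + (m+2) by rw [tri_succ]]
  ring

lemma dia (s : ℕ) : ∀ M, 1 ≤ M →
    (∑ k ∈ Icc 1 M, Aa s k * ∏ j ∈ Ico k M, Df s j)
      + aa * X^(2*s+1) * Dd s M
      + aa * X^(2*s+1) *
        (∑ k ∈ Icc 1 (M-1), Aa (s+1) k * (Df s 0 * ∏ j ∈ Ico (k+1) M, Df s j))
      + (-aa)^(M+1) * X^(tri (M+1) + 2*s*(M+1)) * mq (M-1) = 0 := by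
  intro M hM
  induction M, hM using Nat.le_induction with
  | base =>
    have h1 : tri 1 = 1 := by decide
    have h2 : tri 2 = 3 := by decide
    have he : Finset.Icc 1 (1-1) = (∅ : Finset ℕ) := rfl
    simp only [Finset.Icc_self, Finset.sum_singleton, Finset.Ico_self, Finset.prod_empty,
      Nat.sub_self, he, Finset.sum_empty, mul_zero, add_zero, mul_one]
    unfold Aa Dd Df mq
    simp only [h1, h2, Finset.prod_range_one, Finset.prod_range_zero, Nat.sub_self]
    ring
  | succ M hM IH =>
    obtain ⟨m, rfl⟩ : ∃ m, M = m+1 := ⟨M-1, by omega⟩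
    have hA : (∑ k ∈ Icc 1 (m+1+1), Aa s k * ∏ j ∈ Ico k (m+1+1), Df s j)
        = (∑ k ∈ Icc 1 (m+1), Aa s k * ∏ j ∈ Ico k (m+1), Df s j) * Df s (m+1)
          + Aa s (m+2) := by
      rw [Finset.sum_Icc_succ_top (by omega : (1:ℕ) ≤ m+1+1), Finset.sum_mul]
      refine congrArg₂ (· + ·) ?_ ?_
      · refine Finset.sum_congr rfl fun k hk => ?_
        rw [Finset.prod_Ico_succ_top (by exact_mod_cast (Finset.mem_Icc.mp hk).2)]
        ring
      · rw [Finset.Ico_self, Finset.prod_empty, mul_one]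
    have hC : (∑ k ∈ Icc 1 (m+1+1-1), Aa (s+1) k * (Df s 0 * ∏ j ∈ Ico (k+1) (m+1+1), Df s j))
        = (∑ k ∈ Icc 1 (m+1-1), Aa (s+1) k * (Df s 0 * ∏ j ∈ Ico (k+1) (m+1), Df s j)) * Df s (m+1)
          + Aa (s+1) (m+1) * Df s 0 := by
      have e1 : m+1+1-1 = (m) + 1 := rfl
      have e2 : m+1-1 = m := rfl
      rw [e1, e2, Finset.sum_Icc_succ_top (by omega : (1:ℕ) ≤ m+1), Finset.sum_mul]
      refine congrArg₂ (· + ·) ?_ ?_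
      · refine Finset.sum_congr rfl fun k hk => ?_
        rw [Finset.prod_Ico_succ_top (by
          have := (Finset.mem_Icc.mp hk).2; omega)]
        ring
      · rw [Finset.Ico_self, Finset.prod_empty]; ring
    have hD : Dd s (m+1+1) = Dd s (m+1) * Df s (m+1) := Finset.prod_range_succ _ _
    rw [hA, hC, hD]
    linear_combination IH * Df s (m+1) + bracket2 s m

lemma isUnit_prodDf (s : ℕ) (t : Finset ℕ) : IsUnit (∏ j ∈ t, Df s j) := by
  rw [PowerSeries.isUnit_iff_constantCoeff, map_prod]
  have : ∀ j ∈ t, (PowerSeries.constantCoeff (R := Polynomial ℤ)) (Df s j) = 1 := by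
    intro j _; simp [Df, aa]
  rw [Finset.prod_congr rfl this, Finset.prod_const_one]
  exact isUnit_one

lemma inv_cancel_of (u v : Rr) (hu : IsUnit u) (hv : IsUnit v) :
    v * Ring.inverse (u*v) = Ring.inverse u := by
  rw [Ring.mul_inverse_rev, ← mul_assoc, Ring.mul_inverse_cancel v hv, one_mul]

lemma key1 (s k M : ℕ) (h : k ≤ M) :
    (∏ j ∈ Ico k M, Df s j) * Ring.inverse (Dd s M) = Ring.inverse (Dd s k) := by
  have hs : Dd s k * ∏ j ∈ Ico k M, Df s j = Dd s M :=
    Finset.prod_range_mul_prod_Ico _ h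
  rw [show Dd s M = Dd s k * ∏ j ∈ Ico k M, Df s j from hs.symm]
  exact inv_cancel_of _ _ (isUnit_Dd s k) (isUnit_prodDf s _)

lemma Dd_shift (s k : ℕ) : Dd (s+1) k = ∏ j ∈ Ico 1 (k+1), Df s j := by
  rw [Finset.prod_Ico_eq_prod_range]
  have e : k+1-1 = k := rfl
  rw [e, Dd]
  refine Finset.prod_congr rfl fun j _ => ?_
  unfold Df
  rw [show 2*(j+(s+1))+2 = 2*(1+j+s)+2 by omega]

lemma key2 (s k M : ℕ) (h : k+1 ≤ M) :
    (Df s 0 * ∏ j ∈ Ico (k+1) M, Df s j) * Ring.inverse (Dd s M) = Ring.inverse (Dd (s+1) k) := by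
  have hs : Dd (s+1) k * (Df s 0 * ∏ j ∈ Ico (k+1) M, Df s j) = Dd s M := by
    rw [Dd_shift]
    have h1 : (∏ j ∈ Finset.range (k+1), Df s j) * ∏ j ∈ Ico (k+1) M, Df s j
        = ∏ j ∈ Finset.range M, Df s j := Finset.prod_range_mul_prod_Ico _ h
    have h2 : ∏ j ∈ Finset.range (k+1), Df s j = Df s 0 * ∏ j ∈ Ico 1 (k+1), Df s j := by
      rw [Finset.range_eq_Ico, Finset.prod_eq_prod_Ico_succ_bot (by omega : 0 < k+1)]
    rw [Dd, ← h1, h2]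
    ring
  rw [show Dd s M = Dd (s+1) k * (Df s 0 * ∏ j ∈ Ico (k+1) M, Df s j) from hs.symm]
  exact inv_cancel_of _ _ (isUnit_Dd (s+1) k)
    ((isUnit_Df s 0).mul (isUnit_prodDf s _))

lemma star (s m : ℕ) :
    Ll s (m+1) = 1 - aa * X^(2*s+1) * Ll (s+1) m
      - (-aa)^(m+2) * X^(tri (m+2) + 2*s*(m+2)) * mq m * Ring.inverse (Dd s (m+1)) := by
  have hdia := dia s (m+1) (by omega)
  simp only [Nat.add_sub_cancel] at hdia
  set J := Ring.inverse (Dd s (m+1)) with hJ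
  have h1 : (∑ k ∈ Icc 1 (m+1), Aa s k * ∏ j ∈ Ico k (m+1), Df s j) * J
      = ∑ k ∈ Icc 1 (m+1), Aa s k * Ring.inverse (Dd s k) := by
    rw [Finset.sum_mul]
    refine Finset.sum_congr rfl fun k hk => ?_
    rw [mul_assoc, key1 s k (m+1) (Finset.mem_Icc.mp hk).2]
  have h2 : (∑ k ∈ Icc 1 m, Aa (s+1) k * (Df s 0 * ∏ j ∈ Ico (k+1) (m+1), Df s j)) * J
      = ∑ k ∈ Icc 1 m, Aa (s+1) k * Ring.inverse (Dd (s+1) k) := by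
    rw [Finset.sum_mul]
    refine Finset.sum_congr rfl fun k hk => ?_
    rw [mul_assoc, key2 s k (m+1) (by have := (Finset.mem_Icc.mp hk).2; omega)]
  have h3 : Dd s (m+1) * J = 1 := Ring.mul_inverse_cancel _ (isUnit_Dd s (m+1))
  rw [Ll, Ll]
  linear_combination hdia * J - h1 - (aa*X^(2*s+1))*h2 - (aa*X^(2*s+1))*h3

lemma th_succ (s T : ℕ) : th s (T+1) = 1 - aa * X^(2*s+1) * th (s+1) T := by
  rw [th, Finset.sum_range_succ', th, Finset.mul_sum]
  have hterm : ∀ k : ℕ, (-aa)^(k+1) * X^((k+1)*(k+1) + 2*s*(k+1))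
      = -(aa * X^(2*s+1) * ((-aa)^k * X^(k*k + 2*(s+1)*k))) := by
    intro k; ring
  rw [Finset.sum_congr rfl (fun k _ => hterm k)]
  simp only [pow_zero, Nat.mul_zero, Nat.zero_mul, Nat.add_zero, one_mul]
  rw [Finset.sum_neg_distrib]
  ring

lemma partA : ∀ K s M, K ≤ M+1 → (X:Rr)^K ∣ Ll s M - th s M := by
  intro K
  induction K with
  | zero => intro s M _; simpa using one_dvd _
  | succ K IHK =>
    intro s M h
    match M with
    | 0 =>
      have : Ll s 0 - th s 0 = 0 := by
        have e : Finset.Icc 1 0 = (∅ : Finset ℕ) := rfl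
        simp [Ll, th, e]
      rw [this]; exact dvd_zero _
    | m+1 =>
      obtain ⟨w, hw⟩ := IHK (s+1) m (by omega)
      have key : Ll s (m+1) - th s (m+1)
          = -(aa * X^(2*s+1) * (Ll (s+1) m - th (s+1) m))
            - (-aa)^(m+2) * X^(tri (m+2) + 2*s*(m+2)) * mq m * Ring.inverse (Dd s (m+1)) := by
        rw [star, th_succ]; ring
      rw [key]
      have h1 : (X:Rr)^(K+1) ∣ aa * X^(2*s+1) * (Ll (s+1) m - th (s+1) m) := by
        refine ⟨aa * X^(2*s) * w, ?_⟩
        rw [hw]; ring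
      have h2 : (X:Rr)^(K+1) ∣ (-aa)^(m+2) * X^(tri (m+2) + 2*s*(m+2)) * mq m
          * Ring.inverse (Dd s (m+1)) := by
        have hle : K+1 ≤ tri (m+2) + 2*s*(m+2) := by
          have h5 := tri_ge (m+1)
          have e : m+1+1 = m+2 := rfl
          rw [e] at h5
          omega
        exact (((pow_dvd_pow (X:Rr) hle).mul_left _).mul_right _).mul_right _
      exact dvd_sub (dvd_neg.mpr h1) h2

end PartialTheta2

noncomputable section PartB
open PowerSeries Finset

def qb : ℕ → ℕ → Rr
  | _, 0 => 1
  | 0, _+1 => 0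
  | K+1, m+1 => qb K m + X^(2*(m+1)) * qb K (m+1)

lemma qb_zero (K : ℕ) : qb K 0 = 1 := by cases K <;> rfl

lemma qb_succ (K m : ℕ) : qb (K+1) (m+1) = qb K m + X^(2*(m+1)) * qb K (m+1) := rfl

lemma qb_of_lt : ∀ K m, K < m → qb K m = 0 := by
  intro K
  induction K with
  | zero => intro m h; match m, h with | m+1, _ => rfl
  | succ K IH =>
    intro m h
    match m, h with
    | m+1, h => rw [qb_succ, IH m (by omega), IH (m+1) (by omega), mul_zero, add_zero]

lemma qbt : ∀ K n, (∏ j ∈ Finset.range K, (1 - aa * X^(2*n+1+2*j)))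
    = ∑ m ∈ Finset.range (K+1), (-aa)^m * X^(m*m+2*n*m) * qb K m := by
  intro K
  induction K with
  | zero =>
    intro n
    simp [qb_zero]
  | succ K IH =>
    intro n
    have hL : (∏ j ∈ Finset.range (K+1), (1 - aa * X^(2*n+1+2*j)))
        = (1 - aa * X^(2*n+1)) * ∏ j ∈ Finset.range K, (1 - aa * X^(2*(n+1)+1+2*j)) := by
      rw [Finset.prod_range_succ']
      have e : ∀ j ∈ Finset.range K, (1 - aa * X^(2*n+1+2*(j+1)))
          = (1 - aa * (X:Rr)^(2*(n+1)+1+2*j)) := by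
        intro j _
        rw [show 2*n+1+2*(j+1) = 2*(n+1)+1+2*j by omega]
      rw [Finset.prod_congr rfl e, show 2*n+1+2*0 = 2*n+1 by omega, mul_comm]
    rw [hL, IH (n+1)]
    set S' := ∑ m ∈ Finset.range (K+1), (-aa)^m * X^(m*m+2*(n+1)*m) * qb K m with hS
    symm
    rw [Finset.sum_range_succ']
    have hsplit : ∀ m ∈ Finset.range (K+1),
        (-aa)^(m+1) * (X:Rr)^((m+1)*(m+1)+2*n*(m+1)) * qb (K+1) (m+1)
        = -(aa*X^(2*n+1) * ((-aa)^m * X^(m*m+2*(n+1)*m) * qb K m))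
          + (-aa)^(m+1) * X^((m+1)*(m+1)+2*(n+1)*(m+1)) * qb K (m+1) := by
      intro m _
      rw [qb_succ]
      ring
    rw [Finset.sum_congr rfl hsplit, Finset.sum_add_distrib]
    have hg : ∑ m ∈ Finset.range (K+1),
        (-aa)^(m+1) * (X:Rr)^((m+1)*(m+1)+2*(n+1)*(m+1)) * qb K (m+1)
        = S' - 1 := by
      have h1 : ∑ m ∈ Finset.range (K+1+1), (-aa)^m * (X:Rr)^(m*m+2*(n+1)*m) * qb K m
          = (∑ m ∈ Finset.range (K+1),
              (-aa)^(m+1) * (X:Rr)^((m+1)*(m+1)+2*(n+1)*(m+1)) * qb K (m+1)) + 1 := by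
        rw [Finset.sum_range_succ']
        simp [qb_zero]
      have h2 : ∑ m ∈ Finset.range (K+1+1), (-aa)^m * (X:Rr)^(m*m+2*(n+1)*m) * qb K m
          = S' := by
        rw [Finset.sum_range_succ, qb_of_lt K (K+1) (by omega), mul_zero, add_zero, hS]
      rw [← h2, h1]; ring
    rw [hg, Finset.sum_neg_distrib, ← Finset.mul_sum, ← hS]
    have hT0 : ((-aa)^0 * (X:Rr)^(0*0+2*n*0) * qb (K+1) 0) = 1 := by
      simp [qb_zero]
    rw [hT0]
    ring

lemma prodform : ∀ K m d, m + d = K →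
    qb K m * ∏ j ∈ Finset.range m, (1 - (X:Rr)^(2*(j+1)))
      = ∏ j ∈ Finset.range m, (1 - (X:Rr)^(2*(d+1+j))) := by
  intro K
  induction K with
  | zero =>
    intro m d h
    obtain rfl : m = 0 := by omega
    simp [qb_zero]
  | succ K IH =>
    intro m d h
    match m with
    | 0 => simp [qb_zero]
    | m+1 =>
      have hK : m + d = K := by omega
      have IH1 := IH m d hK
      have gsucc : ∏ j ∈ Finset.range (m+1), (1-(X:Rr)^(2*(j+1)))
          = (∏ j ∈ Finset.range m, (1-(X:Rr)^(2*(j+1)))) * (1-(X:Rr)^(2*(m+1))) :=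
        Finset.prod_range_succ _ _
      have tgt : ∏ j ∈ Finset.range (m+1), (1-(X:Rr)^(2*(d+1+j)))
          = (∏ j ∈ Finset.range m, (1-(X:Rr)^(2*(d+1+j)))) * (1-(X:Rr)^(2*(d+1+m))) :=
        Finset.prod_range_succ _ _
      rcases Nat.eq_zero_or_pos d with hd | hd
      · subst hd
        have hz : qb K (m+1) = 0 := qb_of_lt _ _ (by omega)
        rw [qb_succ, hz, mul_zero, add_zero, gsucc, tgt]
        linear_combination ((1:Rr)-(X:Rr)^(2*(m+1))) * IH1
      · obtain ⟨d', rfl⟩ : ∃ d', d = d'+1 := ⟨d-1, by omega⟩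
        have IH2 := IH (m+1) d' (by omega)
        have e3 : ∏ j ∈ Finset.range (m+1), (1-(X:Rr)^(2*(d'+1+j)))
            = (1-(X:Rr)^(2*(d'+1))) * ∏ j ∈ Finset.range m, (1-(X:Rr)^(2*(d'+1+1+j))) := by
          rw [Finset.prod_range_succ']
          have e : ∀ j ∈ Finset.range m, (1-(X:Rr)^(2*(d'+1+(j+1)))) = (1-(X:Rr)^(2*(d'+1+1+j))) :=
            fun j _ => by rw [show d'+1+(j+1) = d'+1+1+j by omega]
          rw [Finset.prod_congr rfl e, show d'+1+0 = d'+1 by omega, mul_comm]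
        rw [e3, gsucc] at IH2
        rw [qb_succ, gsucc, tgt]
        linear_combination ((1:Rr)-(X:Rr)^(2*(m+1))) * IH1 + (X:Rr)^(2*(m+1)) * IH2

section PartC
open PowerSeries Finset

variable (N : ℕ)

def Pp (N e : ℕ) : Rr := ∏ j ∈ Finset.range (N+1), (1 - (X:Rr)^(e+2*j))

def Qm (m t : ℕ) : Rr :=
  ∑ i ∈ Finset.range (m+1), (X:Rr)^(t*i) * ∏ j ∈ Finset.Ico (i+1) (m+1), (1 - (X:Rr)^(2*j))

lemma tele (m n : ℕ) :
    Qm m (2*n+2) - (1 - (X:Rr)^(2*n)) * Qm m (2*n) = (X:Rr)^(2*n*(m+1)) := by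
  have per : ∀ i ∈ Finset.range (m+1),
      (X:Rr)^((2*n+2)*i) * (∏ j ∈ Finset.Ico (i+1) (m+1), (1 - (X:Rr)^(2*j)))
        - (1 - (X:Rr)^(2*n)) * ((X:Rr)^((2*n)*i) * ∏ j ∈ Finset.Ico (i+1) (m+1), (1 - (X:Rr)^(2*j)))
      = ((X:Rr)^(2*n*(i+1)) * ∏ j ∈ Finset.Ico (i+1) (m+1), (1 - (X:Rr)^(2*j)))
        - ((X:Rr)^(2*n*i) * ∏ j ∈ Finset.Ico i (m+1), (1 - (X:Rr)^(2*j))) := by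
    intro i hi
    have hi' : i < m+1 := Finset.mem_range.mp hi
    rw [Finset.prod_eq_prod_Ico_succ_bot hi']
    ring
  have tsum := Finset.sum_range_sub
    (fun i => (X:Rr)^(2*n*i) * ∏ j ∈ Finset.Ico i (m+1), (1 - (X:Rr)^(2*j))) (m+1)
  -- tsum : ∑ i ∈ range (m+1), (g (i+1) - g i) = g (m+1) - g 0
  have g0 : (X:Rr)^(2*n*0) * ∏ j ∈ Finset.Ico 0 (m+1), (1 - (X:Rr)^(2*j)) = 0 := by
    have : (1 - (X:Rr)^(2*0)) = 0 := by norm_num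
    rw [Finset.prod_eq_zero (Finset.mem_Ico.mpr ⟨le_refl 0, by omega⟩) this, mul_zero]
  have gtop : (X:Rr)^(2*n*(m+1)) * ∏ j ∈ Finset.Ico (m+1) (m+1), (1 - (X:Rr)^(2*j))
      = (X:Rr)^(2*n*(m+1)) := by
    rw [Finset.Ico_self, Finset.prod_empty, mul_one]
  have expand : Qm m (2*n+2) - (1 - (X:Rr)^(2*n)) * Qm m (2*n)
      = ∑ i ∈ Finset.range (m+1),
          ((X:Rr)^((2*n+2)*i) * (∏ j ∈ Finset.Ico (i+1) (m+1), (1 - (X:Rr)^(2*j)))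
            - (1 - (X:Rr)^(2*n)) * ((X:Rr)^((2*n)*i) * ∏ j ∈ Finset.Ico (i+1) (m+1), (1 - (X:Rr)^(2*j)))) := by
    rw [Qm, Qm, Finset.mul_sum, ← Finset.sum_sub_distrib]
  rw [expand, Finset.sum_congr rfl per, tsum, g0, gtop, sub_zero]

def Iq (N : ℕ) : Ideal Rr := Ideal.span {(X:Rr)^(N+1)}

def pq (N : ℕ) : Rr →+* Rr ⧸ Iq N := Ideal.Quotient.mk (Iq N)

lemma pq_eq_of_dvd {f g : Rr} (h : (X:Rr)^(N+1) ∣ f - g) : pq N f = pq N g :=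
  Ideal.Quotient.eq.mpr (Ideal.mem_span_singleton.mpr h)

lemma pq_pow_eq_zero {e : ℕ} (h : N+1 ≤ e) : pq N ((X:Rr)^e) = 0 := by
  have h2 : pq N ((X:Rr)^e) = pq N 0 := pq_eq_of_dvd N (by
    rw [sub_zero]; exact pow_dvd_pow X h)
  rw [h2, map_zero]

lemma prod_sub_one_dvd (t : Finset ℕ) (F : ℕ → Rr) (e : ℕ) (h : ∀ j ∈ t, (X:Rr)^e ∣ F j) :
    (X:Rr)^e ∣ (∏ j ∈ t, (1 - F j)) - 1 := by
  classical
  induction t using Finset.induction with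
  | empty => simp
  | insert b t ha IH =>
    rw [Finset.prod_insert ha]
    have hb := h b (Finset.mem_insert_self b t)
    have hrest := IH (fun j hj => h j (Finset.mem_insert_of_mem hj))
    have : (1 - F b) * ∏ j ∈ t, (1 - F j) - 1
        = ((∏ j ∈ t, (1 - F j)) - 1) - F b * ∏ j ∈ t, (1 - F j) := by ring
    rw [this]
    exact dvd_sub hrest (hb.mul_right _)

lemma euler (m : ℕ) :
    ∑ n ∈ Finset.range (N+1), pq N ((X:Rr)^(2*n*(m+1)) * Pp N (2*n+2))
      = pq N (∏ j ∈ Finset.range m, (1 - (X:Rr)^(2*(j+1)))) := by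
  have hstep : ∀ n, pq N ((X:Rr)^(2*n*(m+1)) * Pp N (2*n+2))
      = pq N (Pp N (2*(n+1)) * Qm m (2*(n+1))) - pq N (Pp N (2*n) * Qm m (2*n)) := by
    intro n
    have hW : Pp N (2*n) = (1 - (X:Rr)^(2*n)) * ∏ j ∈ Finset.range N, (1 - (X:Rr)^(2*n+2+2*j)) := by
      rw [Pp, Finset.prod_range_succ']
      have e : ∀ j ∈ Finset.range N, (1 - (X:Rr)^(2*n+2*(j+1))) = (1 - (X:Rr)^(2*n+2+2*j)) :=
        fun j _ => by rw [show 2*n+2*(j+1) = 2*n+2+2*j by omega]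
      rw [Finset.prod_congr rfl e, show 2*n+2*0 = 2*n by omega, mul_comm]
    have hW2 : Pp N (2*n+2) = (∏ j ∈ Finset.range N, (1 - (X:Rr)^(2*n+2+2*j))) * (1 - (X:Rr)^(2*n+2+2*N)) := by
      rw [Pp, Finset.prod_range_succ]
    have key : Pp N (2*n+2) * Qm m (2*n+2) - Pp N (2*n) * Qm m (2*n)
        - (X:Rr)^(2*n*(m+1)) * Pp N (2*n+2)
        = -((1-(X:Rr)^(2*n)) * Qm m (2*n) * ((∏ j ∈ Finset.range N, (1 - (X:Rr)^(2*n+2+2*j))) * (X:Rr)^(2*n+2+2*N))) := by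
      linear_combination (tele m n) * Pp N (2*n+2) - hW * Qm m (2*n)
        + hW2 * ((1-(X:Rr)^(2*n)) * Qm m (2*n))
    have hz : pq N ((1-(X:Rr)^(2*n)) * Qm m (2*n) * ((∏ j ∈ Finset.range N, (1 - (X:Rr)^(2*n+2+2*j))) * (X:Rr)^(2*n+2+2*N))) = 0 := by
      rw [map_mul, map_mul, map_mul, pq_pow_eq_zero N (by omega), mul_zero, mul_zero]
    have hkq := congrArg (pq N) key
    rw [map_sub, map_sub, map_neg, hz, neg_zero] at hkq
    rw [show 2*(n+1) = 2*n+2 by omega]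
    linear_combination -hkq
  rw [Finset.sum_congr rfl (fun n _ => hstep n),
    Finset.sum_range_sub (fun n => pq N (Pp N (2*n) * Qm m (2*n))) (N+1)]
  have hg0 : pq N (Pp N (2*0) * Qm m (2*0)) = 0 := by
    have hz : Pp N (2*0) = 0 := by
      refine Finset.prod_eq_zero (Finset.mem_range.mpr (by omega : 0 < N+1)) ?_
      norm_num
    rw [hz, zero_mul, map_zero]
  have hgtop : pq N (Pp N (2*(N+1)) * Qm m (2*(N+1)))
      = pq N (∏ j ∈ Finset.range m, (1-(X:Rr)^(2*(j+1)))) := by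
    apply pq_eq_of_dvd
    have hP1 : (X:Rr)^(N+1) ∣ Pp N (2*(N+1)) - 1 := by
      rw [Pp]
      exact prod_sub_one_dvd (Finset.range (N+1)) (fun j => (X:Rr)^(2*(N+1)+2*j)) (N+1)
        (fun j _ => pow_dvd_pow X (by omega))
    have hQ : (X:Rr)^(N+1) ∣ Qm m (2*(N+1)) - ∏ j ∈ Finset.range m, (1-(X:Rr)^(2*(j+1))) := by
      rw [Qm, Finset.sum_range_succ']
      have hC : (X:Rr)^(2*(N+1)*0) * ∏ j ∈ Finset.Ico (0+1) (m+1), (1-(X:Rr)^(2*j))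
          = ∏ j ∈ Finset.range m, (1-(X:Rr)^(2*(j+1))) := by
        rw [Nat.mul_zero, pow_zero, one_mul, Finset.prod_Ico_eq_prod_range]
        have e : ∀ j ∈ Finset.range (m+1-(0+1)), (1-(X:Rr)^(2*(0+1+j))) = (1-(X:Rr)^(2*(j+1))) :=
          fun j _ => by rw [show 0+1+j = j+1 by omega]
        rw [Finset.prod_congr rfl e, show m+1-(0+1) = m by omega]
      rw [hC, add_sub_cancel_right]
      refine Finset.dvd_sum fun i _ => ?_
      have hle : N+1 ≤ 2*(N+1)*(i+1) := by
        calc N+1 ≤ 2*(N+1) := by omega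
        _ ≤ 2*(N+1)*(i+1) := Nat.le_mul_of_pos_right _ (by omega)
      exact (pow_dvd_pow (X:Rr) hle).mul_right _
    have hsplit : Pp N (2*(N+1)) * Qm m (2*(N+1)) - ∏ j ∈ Finset.range m, (1-(X:Rr)^(2*(j+1)))
        = (Pp N (2*(N+1)) - 1) * Qm m (2*(N+1))
          + (Qm m (2*(N+1)) - ∏ j ∈ Finset.range m, (1-(X:Rr)^(2*(j+1)))) := by ring
    rw [hsplit]
    exact dvd_add (hP1.mul_right _) hQ
  rw [hg0, sub_zero, hgtop]

lemma partB :
    pq N (∑ n ∈ Finset.range (N+1), (X:Rr)^(2*n)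
        * (∏ j ∈ Finset.range (N+1), (1 - (X:Rr)^(2*n+2+2*j)))
        * (∏ j ∈ Finset.range (N+1), (1 - aa * (X:Rr)^(2*n+1+2*j))))
      = pq N (th 0 (N+1)) := by
  have hterm : ∀ n, (X:Rr)^(2*n)
        * (∏ j ∈ Finset.range (N+1), (1 - (X:Rr)^(2*n+2+2*j)))
        * (∏ j ∈ Finset.range (N+1), (1 - aa * (X:Rr)^(2*n+1+2*j)))
      = ∑ m ∈ Finset.range (N+2), ((-aa)^m * (X:Rr)^(m*m) * qb (N+1) m)
          * ((X:Rr)^(2*n*(m+1)) * Pp N (2*n+2)) := by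
    intro n
    rw [qbt (N+1) n, Finset.mul_sum]
    refine Finset.sum_congr rfl fun m _ => ?_
    rw [Pp]
    ring
  rw [map_sum, Finset.sum_congr rfl (fun n _ => congrArg (pq N) (hterm n)),
    Finset.sum_congr rfl (fun n (_ : n ∈ Finset.range (N+1)) => map_sum (pq N)
      (fun m => ((-aa)^m * (X:Rr)^(m*m) * qb (N+1) m) * ((X:Rr)^(2*n*(m+1)) * Pp N (2*n+2)))
      (Finset.range (N+2))),
    Finset.sum_comm,
    Finset.sum_congr rfl (fun m (_ : m ∈ Finset.range (N+2)) =>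
      Finset.sum_congr rfl (fun n _ => map_mul (pq N) _ _))]
  have hfact : ∀ m ∈ Finset.range (N+2),
      (∑ n ∈ Finset.range (N+1), pq N ((-aa)^m * (X:Rr)^(m*m) * qb (N+1) m)
          * pq N ((X:Rr)^(2*n*(m+1)) * Pp N (2*n+2)))
      = pq N ((-aa)^m * (X:Rr)^(m*m) * qb (N+1) m)
          * pq N (∏ j ∈ Finset.range m, (1 - (X:Rr)^(2*(j+1)))) := by
    intro m _
    rw [← Finset.mul_sum, euler N m]
  rw [Finset.sum_congr rfl hfact]
  have hpf : ∀ m ∈ Finset.range (N+2),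
      pq N ((-aa)^m * (X:Rr)^(m*m) * qb (N+1) m)
          * pq N (∏ j ∈ Finset.range m, (1 - (X:Rr)^(2*(j+1))))
      = pq N ((-aa)^m * (X:Rr)^(m*m)) := by
    intro m hm
    have hmle : m ≤ N+1 := by have := Finset.mem_range.mp hm; omega
    rw [← map_mul]
    have hp := prodform (N+1) m (N+1-m) (by omega)
    have e1 : (-aa)^m * (X:Rr)^(m*m) * qb (N+1) m * ∏ j ∈ Finset.range m, (1 - (X:Rr)^(2*(j+1)))
        = (-aa)^m * ((X:Rr)^(m*m) * ∏ j ∈ Finset.range m, (1 - (X:Rr)^(2*(N+1-m+1+j)))) := by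
      rw [← hp]; ring
    rw [e1]
    apply pq_eq_of_dvd
    have hdvd : (X:Rr)^(2*(N+1-m+1)) ∣ (∏ j ∈ Finset.range m, (1 - (X:Rr)^(2*(N+1-m+1+j)))) - 1 :=
      prod_sub_one_dvd (Finset.range m) (fun j => (X:Rr)^(2*(N+1-m+1+j))) _
        (fun j _ => pow_dvd_pow X (by omega))
    obtain ⟨w, hw⟩ := hdvd
    have hle : N+1 ≤ m*m + 2*(N+1-m+1) := by
      have : m ≤ m*m := Nat.le_mul_self m
      omega
    refine ⟨(-aa)^m * ((X:Rr)^(m*m + 2*(N+1-m+1) - (N+1)) * w), ?_⟩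
    have hsub : (-aa)^m * ((X:Rr)^(m*m) * ∏ j ∈ Finset.range m, (1 - (X:Rr)^(2*(N+1-m+1+j))))
          - (-aa)^m * (X:Rr)^(m*m)
        = (-aa)^m * (X:Rr)^(m*m) * ((∏ j ∈ Finset.range m, (1 - (X:Rr)^(2*(N+1-m+1+j)))) - 1) := by
      ring
    rw [hsub, hw]
    have hE : (X:Rr)^(m*m) * (X:Rr)^(2*(N+1-m+1))
        = (X:Rr)^(N+1) * (X:Rr)^(m*m + 2*(N+1-m+1) - (N+1)) := by
      rw [← pow_add, ← pow_add]
      congr 1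
      omega
    linear_combination hE * ((-aa)^m * w)
  rw [Finset.sum_congr rfl hpf, th, ← map_sum]
  congr 1
  refine Finset.sum_congr rfl fun k _ => ?_
  rw [show k*k + 2*0*k = k*k by omega]

lemma coeff_eq_of_dvd {f g : Rr} (h : (X:Rr)^(N+1) ∣ f - g) :
    (PowerSeries.coeff (R := Polynomial ℤ) N) f = (PowerSeries.coeff (R := Polynomial ℤ) N) g := by
  have h0 := (PowerSeries.X_pow_dvd_iff.mp h) N (lt_add_one N)
  rwa [map_sub, sub_eq_zero] at h0

end PartC

/-- The two expansions of the partial theta function `∑_{k≥0} (-a)^k q^{k²}` agree: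
`∑_{k≥0} (-a)^k q^{k(k+1)/2} (-q;q)_{k-1} / (aq²;q²)_k
  = ∑_{n≥0} q^{2n} (q^{2n+2};q²)_∞ (aq^{2n+1};q²)_∞`
as formal power series in `q` over `ℤ[a]`.  Summands with index `> N` and factors of
the infinite products with index `j > N` have no effect on the `N`-th coefficient, so
that coefficient is computed from the displayed finite truncations. -/
theorem partial_theta_expansions_agree (N : ℕ) :
    PowerSeries.coeff (R := Polynomial ℤ) N
      (1 + ∑ k ∈ Finset.Icc 1 N,
        (∏ j ∈ Finset.range (k - 1), (1 + PowerSeries.X ^ (j + 1))) *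
          (-(PowerSeries.C (R := Polynomial ℤ) Polynomial.X)) ^ k *
          PowerSeries.X ^ (k * (k + 1) / 2) *
          Ring.inverse (∏ j ∈ Finset.range k,
            (1 - PowerSeries.C (R := Polynomial ℤ) Polynomial.X * PowerSeries.X ^ (2 * j + 2)))) =
    PowerSeries.coeff (R := Polynomial ℤ) N
      (∑ n ∈ Finset.range (N + 1),
        PowerSeries.X ^ (2 * n) *
          (∏ j ∈ Finset.range (N + 1), (1 - PowerSeries.X ^ (2 * n + 2 + 2 * j))) *
          (∏ j ∈ Finset.range (N + 1),
            (1 - PowerSeries.C (R := Polynomial ℤ) Polynomial.X *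
              PowerSeries.X ^ (2 * n + 1 + 2 * j)))) := by
  have haa : PowerSeries.C (R := Polynomial ℤ) Polynomial.X = aa := rfl
  rw [haa]
  have hL : (1 + ∑ k ∈ Finset.Icc 1 N,
      (∏ j ∈ Finset.range (k - 1), (1 + PowerSeries.X ^ (j + 1))) *
        (-aa) ^ k * PowerSeries.X ^ (k * (k + 1) / 2) *
        Ring.inverse (∏ j ∈ Finset.range k, (1 - aa * PowerSeries.X ^ (2 * j + 2))))
      = Ll 0 N := by
    rw [Ll]
    congr 1
    refine Finset.sum_congr rfl fun k _ => ?_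
    rw [Aa, Dd]
    have e1 : tri k + 2*0*k = k*(k+1)/2 := by rw [tri_eq]; omega
    have e2 : ∀ j ∈ Finset.range k, (1 - aa * (X:Rr)^(2*(j+0)+2)) = (1 - aa * (X:Rr)^(2*j+2)) :=
      fun j _ => by rw [show 2*(j+0)+2 = 2*j+2 by omega]
    rw [e1, mq]
    have e3 : (∏ j ∈ Finset.range k, (1 - aa * (X:Rr)^(2*j+2))) = ∏ j ∈ Finset.range k, Df 0 j :=
      Finset.prod_congr rfl fun j _ => by rw [Df, show 2*(j+0)+2 = 2*j+2 by omega]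
    rw [e3]
  rw [hL]
  have h1 : PowerSeries.coeff (R := Polynomial ℤ) N (Ll 0 N)
      = PowerSeries.coeff (R := Polynomial ℤ) N (th 0 N) :=
    coeff_eq_of_dvd N (partA (N+1) 0 N le_rfl)
  have h2 : PowerSeries.coeff (R := Polynomial ℤ) N (th 0 N)
      = PowerSeries.coeff (R := Polynomial ℤ) N (th 0 (N+1)) := by
    symm
    apply coeff_eq_of_dvd N
    have hsum : th 0 (N+1) - th 0 N = (-aa)^(N+1) * (X:Rr)^((N+1)*(N+1)+2*0*(N+1)) := by
      rw [th, th, Finset.sum_range_succ]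
      ring
    rw [hsum]
    exact ((pow_dvd_pow (X:Rr) (by
      have : N+1 ≤ (N+1)*(N+1) := Nat.le_mul_of_pos_left _ (by omega)
      omega)).mul_left _)
  have h3 : PowerSeries.coeff (R := Polynomial ℤ) N
      (∑ n ∈ Finset.range (N + 1), (X:Rr) ^ (2 * n) *
          (∏ j ∈ Finset.range (N + 1), (1 - (X:Rr) ^ (2 * n + 2 + 2 * j))) *
          (∏ j ∈ Finset.range (N + 1), (1 - aa * (X:Rr) ^ (2 * n + 1 + 2 * j))))
      = PowerSeries.coeff (R := Polynomial ℤ) N (th 0 (N+1)) := by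
    apply coeff_eq_of_dvd N
    exact Ideal.mem_span_singleton.mp (Ideal.Quotient.eq.mp (partB N))
  rw [h1, h2, h3]
end PartB
end
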